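/- arXiv:2503.16098 — 4 statements merged into one kernel-verified Lean document; each statement's English description precedes it below -/
import Mathlib

section
/- In the demographic-disparity model with Y1 ∈ {0,1}, Y0 ∈ {a_1, …, a_J} (J ≥ 2), X a standard Borel space with probability measure μ_X, kernels κ1 from X to probability measures on {0,1} and κ0 from X to probability measures on {a_1,…,a_J}, and induced joint laws μ1X, μ0X: fix distinct classes a_j ≠ a_{j†} with p_j := μ0X({a_j} × X) > 0 and p_{j†} := μ0X({a_{j†}} × X) > 0. Set P_A(x) := κ1(x)({1}), P_B(x) := κ0(x)({a_j}), P_C(x) := κ0(x)({a_{j†}}). Then the identified set of the demographic disparity, namely { μ({y1=1, y0=a_j})/p_j − μ({y1=1, y0=a_{j†}})/p_{j†} : μ ∈ M(μ1X, μ0X) }, equals the closed interval [δ^L, δ^U], where δ^U = (∫ min{P_A, P_B} dμ_X)/p_j − (∫ max{P_A + P_C − 1, 0} dμ_X)/p_{j†} and δ^L = (∫ max{P_A + P_B − 1, 0} dμ_X)/p_j − (∫ min{P_A, P_C} dμ_X)/p_{j†} (Corollary 1 for the DD measure, valid for any number J ≥ 2 of protected classes). -/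
open MeasureTheory ProbabilityTheory

/-- The set `M(μ1X, μ0X)` of probability measures on `Y1 × Y0 × X` whose projection on
`(Y1, X)` is `μ1X` and whose projection on `(Y0, X)` is `μ0X`. -/
def MSet {Y1 Y0 X : Type*} [MeasurableSpace Y1] [MeasurableSpace Y0] [MeasurableSpace X]
    (μ1X : Measure (Y1 × X)) (μ0X : Measure (Y0 × X)) :
    Set (Measure (Y1 × Y0 × X)) :=
  {μ | IsProbabilityMeasure μ ∧
    μ.map (fun p => (p.1, p.2.2)) = μ1X ∧ μ.map (fun p => (p.2.1, p.2.2)) = μ0X}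

open scoped ENNReal
set_option linter.unusedSectionVars false

lemma key1 {qj qj' : ℝ≥0∞} (h : qj + qj' ≤ 1) : qj + (1 - qj - qj') = 1 - qj' := by
  rw [tsub_right_comm]
  exact add_tsub_cancel_of_le (ENNReal.le_sub_of_add_le_right
    (ne_top_of_le_ne_top ENNReal.one_ne_top (le_trans le_add_self h)) h)

lemma key2 {a qj qj' : ℝ≥0∞} (h : qj + qj' ≤ 1) :
    a - (1 - qj') = a - qj - (1 - qj - qj') := by
  rw [tsub_tsub, key1 h]

lemma key3 {a qj' : ℝ≥0∞} (h : qj' ≤ 1) : a - (1 - qj') = (a + qj') - 1 := by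
  have h' : qj' ≠ ⊤ := ne_top_of_le_ne_top ENNReal.one_ne_top h
  conv_rhs => rw [← add_tsub_cancel_of_le h]
  rw [← tsub_tsub, ENNReal.add_sub_cancel_right h']

lemma keysum {a qj qj' : ℝ≥0∞} (h : qj + qj' ≤ 1) :
    min a qj + ((a - (1 - qj')) + min (a - qj) (1 - qj - qj')) = a := by
  rw [key2 h, tsub_add_min, add_comm, tsub_add_min]

lemma key_le {a qj' : ℝ≥0∞} (ha : a ≤ 1) (h : qj' ≤ 1) : a - (1 - qj') ≤ qj' := by
  rw [tsub_le_iff_right, add_tsub_cancel_of_le h]; exact ha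

lemma key_div_le_one {r C : ℝ≥0∞} : min r C / C ≤ 1 :=
  le_trans (ENNReal.div_le_div_right (min_le_right _ _) C) ENNReal.div_self_le_one

lemma key_toReal_sub {u v : ℝ≥0∞} (hu : u ≤ 1) (hv : v ≤ 1) :
    ((u + v) - 1).toReal = max (u.toReal + v.toReal - 1) 0 := by
  have hu' : u ≠ ⊤ := ne_top_of_le_ne_top ENNReal.one_ne_top hu
  have hv' : v ≠ ⊤ := ne_top_of_le_ne_top ENNReal.one_ne_top hv
  have huv : u + v ≠ ⊤ := by simp [ENNReal.add_ne_top, hu', hv']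
  rcases le_total (u + v) 1 with h | h
  · rw [tsub_eq_zero_of_le h]
    have : u.toReal + v.toReal ≤ 1 := by
      rw [← ENNReal.toReal_add hu' hv']
      calc (u+v).toReal ≤ (1:ℝ≥0∞).toReal := ENNReal.toReal_mono ENNReal.one_ne_top h
        _ = 1 := by simp
    simp [max_eq_right, this]
  · rw [ENNReal.toReal_sub_of_le h huv, ENNReal.toReal_add hu' hv']
    have : (1:ℝ) ≤ u.toReal + v.toReal := by
      rw [← ENNReal.toReal_add hu' hv']
      calc (1:ℝ) = (1:ℝ≥0∞).toReal := by simp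
        _ ≤ _ := ENNReal.toReal_mono huv h
    simp [max_eq_left, ENNReal.toReal_one, this]

lemma key_toReal_min {u v : ℝ≥0∞} (hu : u ≤ 1) (hv : v ≤ 1) :
    (min u v).toReal = min u.toReal v.toReal :=
  ENNReal.toReal_min (ne_top_of_le_ne_top ENNReal.one_ne_top hu)
    (ne_top_of_le_ne_top ENNReal.one_ne_top hv)

lemma marg_eq {X Y : Type*} [MeasurableSpace X] [MeasurableSpace Y]
    (μX : Measure X) [SFinite μX] (κ : Kernel X Y) [IsSFiniteKernel κ]
    {T : Set Y} (hT : MeasurableSet T) {S : Set X} (hS : MeasurableSet S) :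
    ((μX.compProd κ).map Prod.swap) (T ×ˢ S) = ∫⁻ x in S, κ x T ∂μX := by
  rw [Measure.map_apply measurable_swap (hT.prod hS)]
  have : Prod.swap ⁻¹' (T ×ˢ S) = S ×ˢ T := by
    ext p; simp [Set.mem_prod, and_comm]
  rw [this, Measure.compProd_apply_prod hS hT]

section construct
variable {J : ℕ} {X : Type*} [MeasurableSpace X]
  (κ1 : Kernel X (Fin 2)) (κ0 : Kernel X (Fin J)) (j j' : Fin J)

/-- weights for the extremal coupling: mass put on `(1, k)`. -/
noncomputable def m1 (x : X) (k : Fin J) : ℝ≥0∞ :=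
  if k = j then min (κ1 x {1}) (κ0 x {j})
  else if k = j' then κ1 x {1} - (1 - κ0 x {j'})
  else κ0 x {k} *
    (min (κ1 x {1} - κ0 x {j}) (1 - κ0 x {j} - κ0 x {j'}) / (1 - κ0 x {j} - κ0 x {j'}))

variable [IsMarkovKernel κ1] [IsMarkovKernel κ0]

lemma hpair (hjj' : j ≠ j') (x : X) : κ0 x {j} + κ0 x {j'} ≤ 1 := by
  rw [← measure_union (by simp [hjj']) (measurableSet_singleton _)]
  exact prob_le_one

lemma m1_le (x : X) (k : Fin J) : m1 κ1 κ0 j j' x k ≤ κ0 x {k} := by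
  unfold m1
  split_ifs with h h'
  · subst h; exact min_le_right _ _
  · subst h'; exact key_le prob_le_one prob_le_one
  · exact mul_le_of_le_one_right' key_div_le_one

lemma m1_sum (hjj' : j ≠ j') (x : X) : ∑ k, m1 κ1 κ0 j j' x k = κ1 x {1} := by
  classical
  have hqsum : ∑ k : Fin J, κ0 x {k} = 1 := by
    have hd : ((Finset.univ : Finset (Fin J)) : Set (Fin J)).PairwiseDisjoint
        (fun k => ({k} : Set (Fin J))) := fun a _ b _ hab => by
      simp only [Function.onFun, Set.disjoint_singleton]; exact hab
    have h := (measure_biUnion_finset (μ := κ0 x) (s := Finset.univ)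
      (f := fun k => ({k} : Set (Fin J))) hd (fun b _ => measurableSet_singleton b)).symm
    rw [h]
    have hu : (⋃ k ∈ (Finset.univ : Finset (Fin J)), ({k} : Set (Fin J))) = Set.univ := by
      ext y; simp
    rw [hu]; exact measure_univ
  have hj'mem : j' ∈ Finset.univ.erase j := Finset.mem_erase.2 ⟨hjj'.symm, Finset.mem_univ _⟩
  rw [← Finset.add_sum_erase _ (fun k => m1 κ1 κ0 j j' x k) (Finset.mem_univ j),
    ← Finset.add_sum_erase _ (fun k => m1 κ1 κ0 j j' x k) hj'mem]
  have hrest : ∀ k ∈ (Finset.univ.erase j).erase j', m1 κ1 κ0 j j' x k =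
      κ0 x {k} * (min (κ1 x {1} - κ0 x {j}) (1 - κ0 x {j} - κ0 x {j'}) /
        (1 - κ0 x {j} - κ0 x {j'})) := by
    intro k hk
    rcases Finset.mem_erase.1 hk with ⟨hk1, hk2⟩
    rcases Finset.mem_erase.1 hk2 with ⟨hk3, -⟩
    unfold m1; rw [if_neg hk3, if_neg hk1]
  rw [Finset.sum_congr rfl hrest, ← Finset.sum_mul]
  have hC : ∑ k ∈ (Finset.univ.erase j).erase j', κ0 x {k} = 1 - κ0 x {j} - κ0 x {j'} := by
    have h1 : κ0 x {j} + ∑ k ∈ Finset.univ.erase j, κ0 x {k} = 1 := by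
      rw [Finset.add_sum_erase _ (fun k => κ0 x {k}) (Finset.mem_univ j)]; exact hqsum
    have h2 : ∑ k ∈ Finset.univ.erase j, κ0 x {k} = 1 - κ0 x {j} :=
      ENNReal.eq_sub_of_add_eq (measure_ne_top _ _) (by rw [add_comm]; exact h1)
    have h3 : κ0 x {j'} + ∑ k ∈ (Finset.univ.erase j).erase j', κ0 x {k} = 1 - κ0 x {j} := by
      rw [Finset.add_sum_erase _ (fun k => κ0 x {k}) hj'mem]; exact h2
    exact ENNReal.eq_sub_of_add_eq (measure_ne_top _ _) (by rw [add_comm]; exact h3)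
  rw [hC]
  have hmul : (1 - κ0 x {j} - κ0 x {j'}) *
      (min (κ1 x {1} - κ0 x {j}) (1 - κ0 x {j} - κ0 x {j'}) / (1 - κ0 x {j} - κ0 x {j'})) =
      min (κ1 x {1} - κ0 x {j}) (1 - κ0 x {j} - κ0 x {j'}) := by
    rcases eq_or_ne (1 - κ0 x {j} - κ0 x {j'}) 0 with hC0 | hC0
    · rw [hC0, zero_mul]; simp
    · exact ENNReal.mul_div_cancel hC0
        (ne_top_of_le_ne_top ENNReal.one_ne_top (le_trans tsub_le_self tsub_le_self))
  rw [hmul]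
  have hm1j : m1 κ1 κ0 j j' x j = min (κ1 x {1}) (κ0 x {j}) := if_pos rfl
  have hm1j' : m1 κ1 κ0 j j' x j' = κ1 x {1} - (1 - κ0 x {j'}) := by
    unfold m1; rw [if_neg hjj'.symm, if_pos rfl]
  rw [hm1j, hm1j']
  exact keysum (hpair κ0 j j' hjj' x)

lemma m1_measurable (k : Fin J) : Measurable (fun x => m1 κ1 κ0 j j' x k) := by
  have h1 : Measurable (fun x => κ1 x {1}) := κ1.measurable_coe (measurableSet_singleton _)
  have h0 : ∀ i : Fin J, Measurable (fun x => κ0 x {i}) :=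
    fun i => κ0.measurable_coe (measurableSet_singleton _)
  unfold m1
  split_ifs with h h'
  · exact h1.min (h0 j)
  · exact h1.sub (measurable_const.sub (h0 j'))
  · exact (h0 k).mul (((h1.sub (h0 j)).min ((measurable_const.sub (h0 j)).sub (h0 j'))).div
      ((measurable_const.sub (h0 j)).sub (h0 j')))

/-- the extremal coupling kernel -/
noncomputable def coupleK : Kernel X (Fin 2 × Fin J) where
  toFun x := ∑ k : Fin J, (m1 κ1 κ0 j j' x k • Measure.dirac ((1 : Fin 2), k)
    + (κ0 x {k} - m1 κ1 κ0 j j' x k) • Measure.dirac ((0 : Fin 2), k))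
  measurable' := by
    apply Measure.measurable_of_measurable_coe
    intro s hs
    simp only [Measure.finset_sum_apply, Measure.add_apply, Measure.smul_apply,
      smul_eq_mul, Measure.dirac_apply' _ hs]
    exact Finset.measurable_sum _ fun k _ =>
      ((m1_measurable κ1 κ0 j j' k).mul measurable_const).add
        (((κ0.measurable_coe (measurableSet_singleton k)).sub
          (m1_measurable κ1 κ0 j j' k)).mul measurable_const)

lemma coupleK_apply (x : X) {s : Set (Fin 2 × Fin J)} (hs : MeasurableSet s) :
    coupleK κ1 κ0 j j' x s = ∑ k : Fin J, (m1 κ1 κ0 j j' x k * s.indicator 1 ((1 : Fin 2), k)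
      + (κ0 x {k} - m1 κ1 κ0 j j' x k) * s.indicator 1 ((0 : Fin 2), k)) := by
  show (∑ k : Fin J, _ : Measure (Fin 2 × Fin J)) s = _
  simp only [Measure.finset_sum_apply, Measure.add_apply, Measure.smul_apply,
    smul_eq_mul, Measure.dirac_apply' _ hs]


lemma q_sum (x : X) : ∑ k : Fin J, κ0 x {k} = 1 := by
  have hd : ((Finset.univ : Finset (Fin J)) : Set (Fin J)).PairwiseDisjoint
      (fun k => ({k} : Set (Fin J))) := fun a _ b _ hab => by
    simp only [Function.onFun, Set.disjoint_singleton]; exact hab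
  have h := (measure_biUnion_finset (μ := κ0 x) (s := Finset.univ)
    (f := fun k => ({k} : Set (Fin J))) hd (fun b _ => measurableSet_singleton b)).symm
  rw [h]
  have hu : (⋃ k ∈ (Finset.univ : Finset (Fin J)), ({k} : Set (Fin J))) = Set.univ := by
    ext y; simp
  rw [hu]; exact measure_univ

lemma m0_sum (hjj' : j ≠ j') (x : X) :
    ∑ k : Fin J, (κ0 x {k} - m1 κ1 κ0 j j' x k) = 1 - κ1 x {1} := by
  refine ENNReal.eq_sub_of_add_eq (measure_ne_top _ _) ?_
  rw [← m1_sum κ1 κ0 j j' hjj' x, ← Finset.sum_add_distrib]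
  rw [Finset.sum_congr rfl (fun k _ => tsub_add_cancel_of_le (m1_le κ1 κ0 j j' x k))]
  exact q_sum κ0 x

lemma coupleK_fst (hjj' : j ≠ j') (x : X) :
    (coupleK κ1 κ0 j j' x).map Prod.fst = κ1 x := by
  refine Measure.ext_of_singleton fun y => ?_
  rw [Measure.map_apply measurable_fst (measurableSet_singleton y),
    coupleK_apply κ1 κ0 j j' x (measurable_fst (measurableSet_singleton y))]
  by_cases hy : y = 1
  · subst hy
    simpa [Set.indicator, Fin.ext_iff] using m1_sum κ1 κ0 j j' hjj' x
  · have hy0 : y = 0 := by omega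
    subst hy0
    have hc : ({0} : Set (Fin 2)) = {1}ᶜ := by
      ext z
      simp only [Set.mem_singleton_iff, Set.mem_compl_iff]
      omega
    rw [hc, prob_compl_eq_one_sub (measurableSet_singleton 1)]
    simpa [Set.indicator, Fin.ext_iff] using m0_sum κ1 κ0 j j' hjj' x

lemma coupleK_snd (x : X) :
    (coupleK κ1 κ0 j j' x).map Prod.snd = κ0 x := by
  refine Measure.ext_of_singleton fun i => ?_
  rw [Measure.map_apply measurable_snd (measurableSet_singleton i),
    coupleK_apply κ1 κ0 j j' x (measurable_snd (measurableSet_singleton i))]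
  simp only [Set.indicator, Set.mem_preimage, Set.mem_singleton_iff,
    Pi.one_apply, mul_ite, mul_one, mul_zero]
  rw [Finset.sum_add_distrib, Finset.sum_ite_eq' Finset.univ i,
    Finset.sum_ite_eq' Finset.univ i]
  simp only [Finset.mem_univ, if_true]
  exact add_tsub_cancel_of_le (m1_le κ1 κ0 j j' x i)

lemma coupleK_isMarkov (hjj' : j ≠ j') : IsMarkovKernel (coupleK κ1 κ0 j j') := by
  constructor
  intro x
  constructor
  have h := congrArg (fun m : Measure (Fin 2) => m Set.univ) (coupleK_fst κ1 κ0 j j' hjj' x)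
  simpa [Measure.map_apply measurable_fst MeasurableSet.univ] using h

lemma coupleK_cell1 (x : X) :
    coupleK κ1 κ0 j j' x {((1 : Fin 2), j)} = min (κ1 x {1}) (κ0 x {j}) := by
  rw [coupleK_apply κ1 κ0 j j' x (measurableSet_singleton _)]
  simp only [Set.indicator, Set.mem_singleton_iff, Prod.mk.injEq,
    show ((0 : Fin 2) = 1) ↔ False by simp [Fin.ext_iff], false_and, if_false, true_and,
    Pi.one_apply, mul_ite, mul_one, mul_zero, add_zero]
  rw [Finset.sum_ite_eq' Finset.univ j]
  simp only [Finset.mem_univ, if_true]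
  exact if_pos rfl

lemma coupleK_cell2 (hjj' : j ≠ j') (x : X) :
    coupleK κ1 κ0 j j' x {((1 : Fin 2), j')} = κ1 x {1} - (1 - κ0 x {j'}) := by
  rw [coupleK_apply κ1 κ0 j j' x (measurableSet_singleton _)]
  simp only [Set.indicator, Set.mem_singleton_iff, Prod.mk.injEq,
    show ((0 : Fin 2) = 1) ↔ False by simp [Fin.ext_iff], false_and, if_false, true_and,
    Pi.one_apply, mul_ite, mul_one, mul_zero, add_zero]
  rw [Finset.sum_ite_eq' Finset.univ j']
  simp only [Finset.mem_univ, if_true]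
  unfold m1
  rw [if_neg hjj'.symm, if_pos rfl]

end construct



lemma measurableSet_cell {J : ℕ} {X : Type*} [MeasurableSpace X] (k : Fin J) :
    MeasurableSet {p : Fin 2 × Fin J × X | p.1 = 1 ∧ p.2.1 = k} := by
  have : {p : Fin 2 × Fin J × X | p.1 = 1 ∧ p.2.1 = k} =
      (Prod.fst ⁻¹' {1}) ∩ ((fun p : Fin 2 × Fin J × X => p.2.1) ⁻¹' {k}) := rfl
  rw [this]
  exact (measurable_fst (measurableSet_singleton 1)).inter
    (measurable_snd.fst (measurableSet_singleton k))

lemma construct_coupling {J : ℕ} {X : Type*} [MeasurableSpace X]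
    (μX : Measure X) [IsProbabilityMeasure μX]
    (κ1 : Kernel X (Fin 2)) [IsMarkovKernel κ1]
    (κ0 : Kernel X (Fin J)) [IsMarkovKernel κ0]
    {μ1X : Measure (Fin 2 × X)} {μ0X : Measure (Fin J × X)}
    (hκ1 : (μX.compProd κ1).map Prod.swap = μ1X)
    (hκ0 : (μX.compProd κ0).map Prod.swap = μ0X)
    (j j' : Fin J) (hjj' : j ≠ j') :
    ∃ μ ∈ MSet μ1X μ0X,
      μ {p : Fin 2 × Fin J × X | p.1 = 1 ∧ p.2.1 = j} = ∫⁻ x, min (κ1 x {1}) (κ0 x {j}) ∂μX ∧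
      μ {p : Fin 2 × Fin J × X | p.1 = 1 ∧ p.2.1 = j'} =
        ∫⁻ x, (κ1 x {1} + κ0 x {j'}) - 1 ∂μX := by
  haveI := coupleK_isMarkov κ1 κ0 j j' hjj'
  set κ := coupleK κ1 κ0 j j' with hκdef
  set g : X × (Fin 2 × Fin J) → Fin 2 × Fin J × X := fun q => (q.2.1, q.2.2, q.1) with hg
  have hgm : Measurable g :=
    measurable_snd.fst.prodMk (measurable_snd.snd.prodMk measurable_fst)
  refine ⟨(μX.compProd κ).map g, ⟨?_, ?_, ?_⟩, ?_, ?_⟩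
  · exact Measure.isProbabilityMeasure_map hgm.aemeasurable
  · rw [Measure.map_map (measurable_fst.prodMk measurable_snd.snd) hgm]
    have hcomp : ((fun p : Fin 2 × Fin J × X => (p.1, p.2.2)) ∘ g) =
        fun q : X × (Fin 2 × Fin J) => (q.2.1, q.1) := rfl
    rw [hcomp, ← hκ1]
    refine Measure.ext fun s hs => ?_
    have hh : Measurable (fun q : X × (Fin 2 × Fin J) => (q.2.1, q.1)) :=
      measurable_snd.fst.prodMk measurable_fst
    rw [Measure.map_apply hh hs, Measure.map_apply measurable_swap hs,
      Measure.compProd_apply (hh hs), Measure.compProd_apply (measurable_swap hs)]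
    refine lintegral_congr fun x => ?_
    have hu : MeasurableSet {y : Fin 2 | (y, x) ∈ s} := measurable_prodMk_right hs
    have h1 : (Prod.mk x ⁻¹' ((fun q : X × (Fin 2 × Fin J) => (q.2.1, q.1)) ⁻¹' s)) =
        Prod.fst ⁻¹' {y : Fin 2 | (y, x) ∈ s} := rfl
    have h2 : (Prod.mk x ⁻¹' (Prod.swap ⁻¹' s)) = {y : Fin 2 | (y, x) ∈ s} := rfl
    rw [h1, h2, ← Measure.map_apply measurable_fst hu, coupleK_fst κ1 κ0 j j' hjj' x]
  · rw [Measure.map_map (measurable_snd.fst.prodMk measurable_snd.snd) hgm]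
    have hcomp : ((fun p : Fin 2 × Fin J × X => (p.2.1, p.2.2)) ∘ g) =
        fun q : X × (Fin 2 × Fin J) => (q.2.2, q.1) := rfl
    rw [hcomp, ← hκ0]
    refine Measure.ext fun s hs => ?_
    have hh : Measurable (fun q : X × (Fin 2 × Fin J) => (q.2.2, q.1)) :=
      measurable_snd.snd.prodMk measurable_fst
    rw [Measure.map_apply hh hs, Measure.map_apply measurable_swap hs,
      Measure.compProd_apply (hh hs), Measure.compProd_apply (measurable_swap hs)]
    refine lintegral_congr fun x => ?_
    have hu : MeasurableSet {y : Fin J | (y, x) ∈ s} := measurable_prodMk_right hs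
    have h1 : (Prod.mk x ⁻¹' ((fun q : X × (Fin 2 × Fin J) => (q.2.2, q.1)) ⁻¹' s)) =
        Prod.snd ⁻¹' {y : Fin J | (y, x) ∈ s} := rfl
    have h2 : (Prod.mk x ⁻¹' (Prod.swap ⁻¹' s)) = {y : Fin J | (y, x) ∈ s} := rfl
    rw [h1, h2, ← Measure.map_apply measurable_snd hu, coupleK_snd κ1 κ0 j j' x]
  · rw [Measure.map_apply hgm (measurableSet_cell j)]
    have hpre : g ⁻¹' {p : Fin 2 × Fin J × X | p.1 = 1 ∧ p.2.1 = j} =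
        Set.univ ×ˢ {((1 : Fin 2), j)} := by
      ext q
      simp [hg, Set.mem_prod, Prod.ext_iff, eq_comm]
    rw [hpre, Measure.compProd_apply_prod MeasurableSet.univ (measurableSet_singleton _),
      Measure.restrict_univ]
    exact lintegral_congr fun x => coupleK_cell1 κ1 κ0 j j' x
  · rw [Measure.map_apply hgm (measurableSet_cell j')]
    have hpre : g ⁻¹' {p : Fin 2 × Fin J × X | p.1 = 1 ∧ p.2.1 = j'} =
        Set.univ ×ˢ {((1 : Fin 2), j')} := by
      ext q
      simp [hg, Set.mem_prod, Prod.ext_iff, eq_comm]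
    rw [hpre, Measure.compProd_apply_prod MeasurableSet.univ (measurableSet_singleton _),
      Measure.restrict_univ]
    refine lintegral_congr fun x => ?_
    rw [coupleK_cell2 κ1 κ0 j j' hjj' x]
    exact key3 prob_le_one

section bounds
variable {J : ℕ} {X : Type*} [MeasurableSpace X]
  {μX : Measure X} [IsProbabilityMeasure μX]
  {κ1 : Kernel X (Fin 2)} [IsMarkovKernel κ1]
  {κ0 : Kernel X (Fin J)} [IsMarkovKernel κ0]
  {μ1X : Measure (Fin 2 × X)} {μ0X : Measure (Fin J × X)}
  {μ : Measure (Fin 2 × Fin J × X)}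

lemma mset_apply1 (h1 : μ.map (fun p => (p.1, p.2.2)) = μ1X)
    {T : Set (Fin 2)} (hT : MeasurableSet T) {S : Set X} (hS : MeasurableSet S) :
    μ {p : Fin 2 × Fin J × X | p.1 ∈ T ∧ p.2.2 ∈ S} = μ1X (T ×ˢ S) := by
  rw [← h1, Measure.map_apply (measurable_fst.prodMk measurable_snd.snd) (hT.prod hS)]
  congr 1

lemma mset_apply0 (h0 : μ.map (fun p => (p.2.1, p.2.2)) = μ0X)
    {T : Set (Fin J)} (hT : MeasurableSet T) {S : Set X} (hS : MeasurableSet S) :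
    μ {p : Fin 2 × Fin J × X | p.2.1 ∈ T ∧ p.2.2 ∈ S} = μ0X (T ×ˢ S) := by
  rw [← h0, Measure.map_apply (measurable_snd.fst.prodMk measurable_snd.snd) (hT.prod hS)]
  congr 1

lemma mset_cell_le
    (hκ1 : (μX.compProd κ1).map Prod.swap = μ1X)
    (hκ0 : (μX.compProd κ0).map Prod.swap = μ0X)
    (hμ : μ ∈ MSet μ1X μ0X) (k : Fin J) :
    μ {p : Fin 2 × Fin J × X | p.1 = 1 ∧ p.2.1 = k} ≤
      ∫⁻ x, min (κ1 x {1}) (κ0 x {k}) ∂μX := by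
  obtain ⟨hprob, h1, h0⟩ := hμ
  set S := {x | κ1 x {1} ≤ κ0 x {k}} with hSdef
  have hS : MeasurableSet S := measurableSet_le
    (κ1.measurable_coe (measurableSet_singleton 1))
    (κ0.measurable_coe (measurableSet_singleton k))
  have hsub : {p : Fin 2 × Fin J × X | p.1 = 1 ∧ p.2.1 = k} ⊆
      {p : Fin 2 × Fin J × X | p.1 ∈ ({1} : Set (Fin 2)) ∧ p.2.2 ∈ S} ∪
      {p : Fin 2 × Fin J × X | p.2.1 ∈ ({k} : Set (Fin J)) ∧ p.2.2 ∈ Sᶜ} := by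
    intro p hp
    by_cases hx : p.2.2 ∈ S
    · exact Or.inl ⟨hp.1, hx⟩
    · exact Or.inr ⟨hp.2, hx⟩
  calc μ {p : Fin 2 × Fin J × X | p.1 = 1 ∧ p.2.1 = k}
      ≤ μ ({p : Fin 2 × Fin J × X | p.1 ∈ ({1} : Set (Fin 2)) ∧ p.2.2 ∈ S} ∪
        {p : Fin 2 × Fin J × X | p.2.1 ∈ ({k} : Set (Fin J)) ∧ p.2.2 ∈ Sᶜ}) :=
        measure_mono hsub
    _ ≤ μ {p : Fin 2 × Fin J × X | p.1 ∈ ({1} : Set (Fin 2)) ∧ p.2.2 ∈ S} +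
        μ {p : Fin 2 × Fin J × X | p.2.1 ∈ ({k} : Set (Fin J)) ∧ p.2.2 ∈ Sᶜ} :=
        measure_union_le _ _
    _ = μ1X (({1} : Set (Fin 2)) ×ˢ S) + μ0X (({k} : Set (Fin J)) ×ˢ Sᶜ) := by
        rw [mset_apply1 h1 (measurableSet_singleton 1) hS,
          mset_apply0 h0 (measurableSet_singleton k) hS.compl]
    _ = (∫⁻ x in S, κ1 x {1} ∂μX) + ∫⁻ x in Sᶜ, κ0 x {k} ∂μX := by
        rw [← hκ1, ← hκ0, marg_eq μX κ1 (measurableSet_singleton 1) hS,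
          marg_eq μX κ0 (measurableSet_singleton k) hS.compl]
    _ = (∫⁻ x in S, min (κ1 x {1}) (κ0 x {k}) ∂μX) +
        ∫⁻ x in Sᶜ, min (κ1 x {1}) (κ0 x {k}) ∂μX := by
        congr 1
        · refine setLIntegral_congr_fun hS (fun x hx => ?_)
          exact (min_eq_left hx).symm
        · refine setLIntegral_congr_fun hS.compl (fun x hx => ?_)
          exact (min_eq_right (not_le.mp (by simpa [hSdef] using hx)).le).symm
    _ = ∫⁻ x, min (κ1 x {1}) (κ0 x {k}) ∂μX := lintegral_add_compl _ hS

lemma mset_cell_ge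
    (hκ1 : (μX.compProd κ1).map Prod.swap = μ1X)
    (hκ0 : (μX.compProd κ0).map Prod.swap = μ0X)
    (hμ : μ ∈ MSet μ1X μ0X) (k : Fin J) :
    ∫⁻ x, (κ1 x {1} + κ0 x {k}) - 1 ∂μX ≤
      μ {p : Fin 2 × Fin J × X | p.1 = 1 ∧ p.2.1 = k} := by
  obtain ⟨hprob, h1, h0⟩ := hμ
  haveI := hprob
  set S := {x | 1 ≤ κ1 x {1} + κ0 x {k}} with hSdef
  have hS : MeasurableSet S := measurableSet_le measurable_const
    ((κ1.measurable_coe (measurableSet_singleton 1)).add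
      (κ0.measurable_coe (measurableSet_singleton k)))
  have hzero : ∫⁻ x, (κ1 x {1} + κ0 x {k}) - 1 ∂μX =
      ∫⁻ x in S, ((κ1 x {1} + κ0 x {k}) - 1) ∂μX := by
    rw [← lintegral_add_compl (fun x => (κ1 x {1} + κ0 x {k}) - 1) hS]
    have hz : ∫⁻ x in Sᶜ, ((κ1 x {1} + κ0 x {k}) - 1) ∂μX = 0 := by
      rw [setLIntegral_congr_fun hS.compl
        (fun x hx =>
          tsub_eq_zero_of_le (not_le.mp (by simpa [hSdef] using hx)).le)]
      simp
    rw [hz, add_zero]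
  have hsplit : ∫⁻ x in S, ((κ1 x {1} + κ0 x {k}) - 1) ∂μX =
      (∫⁻ x in S, κ1 x {1} ∂μX) - ∫⁻ x in S, (1 - κ0 x {k}) ∂μX := by
    rw [setLIntegral_congr_fun hS
      (fun x _ => (key3 (prob_le_one : κ0 x {k} ≤ 1)).symm)]
    refine lintegral_sub
      (measurable_const.sub (κ0.measurable_coe (measurableSet_singleton k))) ?_ ?_
    · have hle1 : ∫⁻ x in S, (1 - κ0 x {k}) ∂μX ≤ 1 := by
        calc ∫⁻ x in S, (1 - κ0 x {k}) ∂μX ≤ ∫⁻ _ in S, 1 ∂μX :=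
              lintegral_mono fun x => tsub_le_self
          _ = μX S := setLIntegral_one S
          _ ≤ 1 := prob_le_one
      exact (hle1.trans_lt ENNReal.one_lt_top).ne
    · refine (ae_restrict_iff' hS).2 (ae_of_all _ fun x hx => ?_)
      exact tsub_le_iff_right.2 hx
  have hle : ∫⁻ x in S, κ1 x {1} ∂μX ≤
      μ {p : Fin 2 × Fin J × X | p.1 = 1 ∧ p.2.1 = k} + ∫⁻ x in S, (1 - κ0 x {k}) ∂μX := by
    have hsub : {p : Fin 2 × Fin J × X | p.1 ∈ ({1} : Set (Fin 2)) ∧ p.2.2 ∈ S} ⊆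
        {p : Fin 2 × Fin J × X | p.1 = 1 ∧ p.2.1 = k} ∪
        {p : Fin 2 × Fin J × X | p.2.1 ∈ (({k} : Set (Fin J))ᶜ) ∧ p.2.2 ∈ S} := by
      intro p hp
      by_cases h : p.2.1 = k
      · exact Or.inl ⟨hp.1, h⟩
      · exact Or.inr ⟨h, hp.2⟩
    calc ∫⁻ x in S, κ1 x {1} ∂μX
        = μ1X (({1} : Set (Fin 2)) ×ˢ S) := by
          rw [← hκ1, marg_eq μX κ1 (measurableSet_singleton 1) hS]
      _ = μ {p : Fin 2 × Fin J × X | p.1 ∈ ({1} : Set (Fin 2)) ∧ p.2.2 ∈ S} :=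
          (mset_apply1 h1 (measurableSet_singleton 1) hS).symm
      _ ≤ μ {p : Fin 2 × Fin J × X | p.1 = 1 ∧ p.2.1 = k} +
          μ {p : Fin 2 × Fin J × X | p.2.1 ∈ (({k} : Set (Fin J))ᶜ) ∧ p.2.2 ∈ S} :=
          le_trans (measure_mono hsub) (measure_union_le _ _)
      _ = μ {p : Fin 2 × Fin J × X | p.1 = 1 ∧ p.2.1 = k} +
          μ0X ((({k} : Set (Fin J))ᶜ) ×ˢ S) := by
          rw [mset_apply0 h0 (measurableSet_singleton k).compl hS]
      _ = μ {p : Fin 2 × Fin J × X | p.1 = 1 ∧ p.2.1 = k} +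
          ∫⁻ x in S, κ0 x (({k} : Set (Fin J))ᶜ) ∂μX := by
          rw [← hκ0, marg_eq μX κ0 (measurableSet_singleton k).compl hS]
      _ = μ {p : Fin 2 × Fin J × X | p.1 = 1 ∧ p.2.1 = k} +
          ∫⁻ x in S, (1 - κ0 x {k}) ∂μX := by
          congr 1
          exact setLIntegral_congr_fun hS (fun x _ =>
            prob_compl_eq_one_sub (measurableSet_singleton k))
  rw [hzero, hsplit]
  exact tsub_le_iff_right.2 hle

end bounds



/-- Corollary 1: for any number `J ≥ 2` of protected classes, the identified set of the
demographic disparity `δ_DD(j, j†)` between two distinct classes equals the closed interval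
`[δ^L, δ^U]` given by the Fréchet–Hoeffding-type bounds. -/
theorem demographic_disparity_interval
    {J : ℕ} (hJ : 2 ≤ J) {X : Type*} [MeasurableSpace X] [StandardBorelSpace X]
    (μX : Measure X) [IsProbabilityMeasure μX]
    (κ1 : Kernel X (Fin 2)) [IsMarkovKernel κ1]
    (κ0 : Kernel X (Fin J)) [IsMarkovKernel κ0]
    (μ1X : Measure (Fin 2 × X)) (μ0X : Measure (Fin J × X))
    (hκ1 : (μX.compProd κ1).map Prod.swap = μ1X)
    (hκ0 : (μX.compProd κ0).map Prod.swap = μ0X)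
    (j j' : Fin J) (hjj' : j ≠ j')
    (pj pj' : ℝ)
    (hpj : pj = (μ0X {q : Fin J × X | q.1 = j}).toReal)
    (hpj' : pj' = (μ0X {q : Fin J × X | q.1 = j'}).toReal)
    (hpjpos : 0 < pj) (hpj'pos : 0 < pj')
    (PA PB PC : X → ℝ)
    (hPA : PA = fun x => (κ1 x {1}).toReal)
    (hPB : PB = fun x => (κ0 x {j}).toReal)
    (hPC : PC = fun x => (κ0 x {j'}).toReal) :
    {d : ℝ | ∃ μ ∈ MSet μ1X μ0X,
        d = (μ {p : Fin 2 × Fin J × X | p.1 = 1 ∧ p.2.1 = j}).toReal / pj -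
            (μ {p : Fin 2 × Fin J × X | p.1 = 1 ∧ p.2.1 = j'}).toReal / pj'} =
      Set.Icc
        ((∫ x, max (PA x + PB x - 1) 0 ∂μX) / pj - (∫ x, min (PA x) (PC x) ∂μX) / pj')
        ((∫ x, min (PA x) (PB x) ∂μX) / pj - (∫ x, max (PA x + PC x - 1) 0 ∂μX) / pj') := by
  have hma : Measurable fun x => κ1 x {1} := κ1.measurable_coe (measurableSet_singleton 1)
  have hmq : ∀ k : Fin J, Measurable fun x => κ0 x {k} :=
    fun k => κ0.measurable_coe (measurableSet_singleton k)
  set AJ := ∫⁻ x, min (κ1 x {1}) (κ0 x {j}) ∂μX with hAJdef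
  set AJ' := ∫⁻ x, min (κ1 x {1}) (κ0 x {j'}) ∂μX with hAJ'def
  set BJ := ∫⁻ x, (κ1 x {1} + κ0 x {j}) - 1 ∂μX with hBJdef
  set BJ' := ∫⁻ x, (κ1 x {1} + κ0 x {j'}) - 1 ∂μX with hBJ'def
  have hle1 : ∀ k : Fin J, (∫⁻ x, min (κ1 x {1}) (κ0 x {k}) ∂μX) ≤ 1 := by
    intro k
    calc ∫⁻ x, min (κ1 x {1}) (κ0 x {k}) ∂μX ≤ ∫⁻ _, 1 ∂μX :=
        lintegral_mono fun x => (min_le_left _ _).trans prob_le_one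
      _ = 1 := by simp
  have hle2 : ∀ k : Fin J, (∫⁻ x, (κ1 x {1} + κ0 x {k}) - 1 ∂μX) ≤ 1 := by
    intro k
    have hstep : ∀ x, (κ1 x {1} + κ0 x {k}) - 1 ≤ (1 : ℝ≥0∞) := by
      intro x
      rw [tsub_le_iff_right]
      exact add_le_add prob_le_one prob_le_one
    calc ∫⁻ x, (κ1 x {1} + κ0 x {k}) - 1 ∂μX ≤ ∫⁻ _, 1 ∂μX :=
        lintegral_mono fun x => hstep x
      _ = 1 := by simp
  have hAJt : AJ ≠ ⊤ := ((hle1 j).trans_lt ENNReal.one_lt_top).ne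
  have hAJ't : AJ' ≠ ⊤ := ((hle1 j').trans_lt ENNReal.one_lt_top).ne
  have hBJt : BJ ≠ ⊤ := ((hle2 j).trans_lt ENNReal.one_lt_top).ne
  have hBJ't : BJ' ≠ ⊤ := ((hle2 j').trans_lt ENNReal.one_lt_top).ne
  have hImin : ∀ k : Fin J, (∫ x, min (PA x) ((κ0 x {k}).toReal) ∂μX) =
      (∫⁻ x, min (κ1 x {1}) (κ0 x {k}) ∂μX).toReal := by
    intro k
    rw [hPA, ← integral_toReal ((hma.min (hmq k)).aemeasurable)
      (ae_of_all _ fun x => (min_le_left _ _).trans_lt (measure_lt_top _ _))]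
    exact integral_congr_ae (ae_of_all _ fun x =>
      (key_toReal_min prob_le_one prob_le_one).symm)
  have hImax : ∀ k : Fin J, (∫ x, max (PA x + (κ0 x {k}).toReal - 1) 0 ∂μX) =
      (∫⁻ x, (κ1 x {1} + κ0 x {k}) - 1 ∂μX).toReal := by
    intro k
    rw [hPA, ← integral_toReal (f := fun x => (κ1 x {1} + κ0 x {k}) - 1) (((hma.add (hmq k)).sub measurable_const).aemeasurable)
      (ae_of_all _ fun x => lt_of_le_of_lt tsub_le_self
        (ENNReal.add_lt_top.2 ⟨measure_lt_top _ _, measure_lt_top _ _⟩))]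
    exact integral_congr_ae (ae_of_all _ fun x =>
      (key_toReal_sub prob_le_one prob_le_one).symm)
  have hI1 : (∫ x, min (PA x) (PB x) ∂μX) = AJ.toReal := by rw [hPB]; exact hImin j
  have hI1' : (∫ x, min (PA x) (PC x) ∂μX) = AJ'.toReal := by rw [hPC]; exact hImin j'
  have hI2 : (∫ x, max (PA x + PB x - 1) 0 ∂μX) = BJ.toReal := by rw [hPB]; exact hImax j
  have hI2' : (∫ x, max (PA x + PC x - 1) 0 ∂μX) = BJ'.toReal := by rw [hPC]; exact hImax j'
  rw [hI1, hI1', hI2, hI2']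
  ext d
  simp only [Set.mem_setOf_eq, Set.mem_Icc]
  constructor
  · rintro ⟨μ, hμ, rfl⟩
    haveI := hμ.1
    have huj := mset_cell_le hκ1 hκ0 hμ j
    have huj' := mset_cell_le hκ1 hκ0 hμ j'
    have hlj := mset_cell_ge hκ1 hκ0 hμ j
    have hlj' := mset_cell_ge hκ1 hκ0 hμ j'
    have r1 : (μ {p : Fin 2 × Fin J × X | p.1 = 1 ∧ p.2.1 = j}).toReal ≤ AJ.toReal :=
      ENNReal.toReal_mono hAJt huj
    have r2 : BJ.toReal ≤ (μ {p : Fin 2 × Fin J × X | p.1 = 1 ∧ p.2.1 = j}).toReal :=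
      ENNReal.toReal_mono (measure_ne_top _ _) hlj
    have r3 : (μ {p : Fin 2 × Fin J × X | p.1 = 1 ∧ p.2.1 = j'}).toReal ≤ AJ'.toReal :=
      ENNReal.toReal_mono hAJ't huj'
    have r4 : BJ'.toReal ≤ (μ {p : Fin 2 × Fin J × X | p.1 = 1 ∧ p.2.1 = j'}).toReal :=
      ENNReal.toReal_mono (measure_ne_top _ _) hlj'
    constructor
    · gcongr
    · gcongr
  · rintro ⟨hdl, hdu⟩
    obtain ⟨μU, hμU, hUj, hUj'⟩ := construct_coupling μX κ1 κ0 hκ1 hκ0 j j' hjj'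
    obtain ⟨μL, hμL, hLj', hLj⟩ := construct_coupling μX κ1 κ0 hκ1 hκ0 j' j hjj'.symm
    set L : ℝ := BJ.toReal / pj - AJ'.toReal / pj' with hLdef
    set U : ℝ := AJ.toReal / pj - BJ'.toReal / pj' with hUdef
    set t : ℝ := (U - d) / (U - L) with htdef
    have hUL : L ≤ U := le_trans hdl hdu
    have ht0 : 0 ≤ t := div_nonneg (by linarith) (by linarith)
    have ht1 : t ≤ 1 := by
      rcases eq_or_lt_of_le hUL with h | h
      · rw [htdef, ← h, sub_self, div_zero]; norm_num
      · exact (div_le_one (by linarith)).2 (by linarith)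
    set μt : Measure (Fin 2 × Fin J × X) :=
      ENNReal.ofReal t • μL + ENNReal.ofReal (1 - t) • μU with hμtdef
    obtain ⟨hLp, hL1, hL0⟩ := hμL
    obtain ⟨hUp, hU1, hU0⟩ := hμU
    haveI := hLp; haveI := hUp
    have hcoef : ENNReal.ofReal t + ENNReal.ofReal (1 - t) = 1 := by
      rw [← ENNReal.ofReal_add ht0 (by linarith)]
      norm_num
    have hmem : μt ∈ MSet μ1X μ0X := by
      refine ⟨?_, ?_, ?_⟩
      · constructor
        rw [hμtdef]
        simp only [Measure.add_apply, Measure.smul_apply, smul_eq_mul, measure_univ, mul_one]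
        exact hcoef
      · rw [hμtdef, Measure.map_add _ _ (measurable_fst.prodMk measurable_snd.snd),
          Measure.map_smul, Measure.map_smul, hL1, hU1, ← add_smul, hcoef, one_smul]
      · rw [hμtdef, Measure.map_add _ _ (measurable_snd.fst.prodMk measurable_snd.snd),
          Measure.map_smul, Measure.map_smul, hL0, hU0, ← add_smul, hcoef, one_smul]
    refine ⟨μt, hmem, ?_⟩
    have happly : ∀ E : Set (Fin 2 × Fin J × X), (μt E).toReal =
        t * (μL E).toReal + (1 - t) * (μU E).toReal := by
      intro E
      rw [hμtdef]
      simp only [Measure.add_apply, Measure.smul_apply, smul_eq_mul]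
      rw [ENNReal.toReal_add (ENNReal.mul_ne_top ENNReal.ofReal_ne_top (measure_ne_top _ _))
        (ENNReal.mul_ne_top ENNReal.ofReal_ne_top (measure_ne_top _ _)),
        ENNReal.toReal_mul, ENNReal.toReal_mul, ENNReal.toReal_ofReal ht0,
        ENNReal.toReal_ofReal (by linarith)]
    rw [happly, happly, hUj, hUj', hLj, hLj']
    have hkey : t * (U - L) = U - d := by
      rcases eq_or_lt_of_le hUL with h | h
      · have hd : d = U := le_antisymm hdu (h ▸ hdl)
        rw [htdef, ← h, sub_self, div_zero, zero_mul, hd, ← h, sub_self]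
      · rw [htdef, div_mul_cancel₀ _ (by linarith : U - L ≠ 0)]
    have expand : (t * BJ.toReal + (1 - t) * AJ.toReal) / pj -
        (t * AJ'.toReal + (1 - t) * BJ'.toReal) / pj' = t * L + (1 - t) * U := by
      rw [hLdef, hUdef]; ring
    rw [expand]
    nlinarith [hkey]
end

section
/- Fix J ≥ 1 and cost values π(i, j) ∈ ℝ for i ∈ {0, 1} and j ∈ {1, …, J}, nonnegative capacities Γ0(1), …, Γ0(J) and nonnegative demands Γ1(0), Γ1(1) with Γ1(0) + Γ1(1) ≤ Σ_{j=1}^J Γ0(j). Suppose π is submodular: for all j > j†, π(1, j) − π(0, j) − π(1, j†) + π(0, j†) ≤ 0. Consider the feasible set F of matrices Γ(i, j) ≥ 0 with Σ_{i=0}^1 Γ(i, j) ≤ Γ0(j) for every j and Σ_{j=1}^J Γ(i, j) = Γ1(i) for i = 0, 1. Then F is nonempty, the minimum of Σ_{i,j} π(i,j) Γ(i,j) over F is attained, and there exists a minimizer Γ* with monotone support: for some J* ∈ {1, …, J}, Γ*(1, j) = 0 for all j < J* and Γ*(0, j) = 0 for all j > J* (the monotone-support lemma for the optimal partial transport problem,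 Lemma 4). -/
section Aux

variable {J : ℕ}

/-- The feasible set of the partial transport LP. -/
def ptFeas (Γ0 : Fin J → ℝ) (Γ1 : Fin 2 → ℝ) : Set (Fin 2 → Fin J → ℝ) :=
  {Γ | (∀ i j, 0 ≤ Γ i j) ∧ (∀ j, Γ 0 j + Γ 1 j ≤ Γ0 j) ∧ (∀ i, ∑ j, Γ i j = Γ1 i)}

lemma ptFeas_nonempty (Γ0 : Fin J → ℝ) (hΓ0 : ∀ j, 0 ≤ Γ0 j)
    (Γ1 : Fin 2 → ℝ) (hΓ1 : ∀ i, 0 ≤ Γ1 i)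
    (hmass : Γ1 0 + Γ1 1 ≤ ∑ j, Γ0 j) : (ptFeas Γ0 Γ1).Nonempty := by
  set S0 : ℝ := ∑ j, Γ0 j with hS0
  rcases eq_or_lt_of_le (Finset.sum_nonneg fun j _ => hΓ0 j : (0:ℝ) ≤ S0) with h0 | h0
  · refine ⟨0, fun i j => le_refl 0, fun j => by simpa using hΓ0 j, fun i => ?_⟩
    have h1 : Γ1 0 = 0 ∧ Γ1 1 = 0 := by
      constructor <;> nlinarith [hΓ1 0, hΓ1 1]
    fin_cases i <;> simp [h1.1, h1.2]
  · refine ⟨fun i j => Γ1 i * Γ0 j / S0, fun i j => div_nonneg (mul_nonneg (hΓ1 i) (hΓ0 j)) h0.le, fun j => ?_, fun i => ?_⟩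
    · rw [← add_div, div_le_iff₀ h0]
      have := hΓ0 j
      nlinarith
    · rw [← Finset.sum_div, ← Finset.mul_sum, ← hS0, mul_div_assoc, div_self h0.ne', mul_one]

lemma ptFeas_isCompact (Γ0 : Fin J → ℝ) (hΓ0 : ∀ j, 0 ≤ Γ0 j) (Γ1 : Fin 2 → ℝ) :
    IsCompact (ptFeas Γ0 Γ1) := by
  have hK : IsCompact {Γ : Fin 2 → Fin J → ℝ | ∀ i ∈ Set.univ, ∀ j ∈ Set.univ,
      Γ i j ∈ Set.Icc (0:ℝ) (Γ0 j)} := by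
    have := isCompact_univ_pi (ι := Fin 2) (s := fun _ : Fin 2 =>
      (Set.univ : Set (Fin J)).pi fun j => Set.Icc (0:ℝ) (Γ0 j))
      (fun _ => isCompact_univ_pi fun j => isCompact_Icc)
    exact this
  refine IsCompact.of_isClosed_subset hK ?_ ?_
  · have h1 : IsClosed {Γ : Fin 2 → Fin J → ℝ | ∀ i j, 0 ≤ Γ i j} := by
      have : {Γ : Fin 2 → Fin J → ℝ | ∀ i j, 0 ≤ Γ i j}
          = ⋂ i, ⋂ j, {Γ : Fin 2 → Fin J → ℝ | 0 ≤ Γ i j} := by ext; simp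
      rw [this]
      refine isClosed_iInter fun i => isClosed_iInter fun j => ?_
      exact isClosed_le continuous_const ((continuous_apply j).comp (continuous_apply i))
    have h2 : IsClosed {Γ : Fin 2 → Fin J → ℝ | ∀ j, Γ 0 j + Γ 1 j ≤ Γ0 j} := by
      have : {Γ : Fin 2 → Fin J → ℝ | ∀ j, Γ 0 j + Γ 1 j ≤ Γ0 j}
          = ⋂ j, {Γ : Fin 2 → Fin J → ℝ | Γ 0 j + Γ 1 j ≤ Γ0 j} := by ext; simp
      rw [this]
      refine isClosed_iInter fun j => ?_
      exact isClosed_le (Continuous.add (f := fun Γ : Fin 2 → Fin J → ℝ => Γ 0 j) (g := fun Γ => Γ 1 j) ((continuous_apply j).comp (continuous_apply 0))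
        ((continuous_apply j).comp (continuous_apply 1))) continuous_const
    have h3 : IsClosed {Γ : Fin 2 → Fin J → ℝ | ∀ i, ∑ j, Γ i j = Γ1 i} := by
      have : {Γ : Fin 2 → Fin J → ℝ | ∀ i, ∑ j, Γ i j = Γ1 i}
          = ⋂ i, {Γ : Fin 2 → Fin J → ℝ | ∑ j, Γ i j = Γ1 i} := by ext; simp
      rw [this]
      refine isClosed_iInter fun i => ?_
      exact isClosed_eq (continuous_finset_sum _ fun j _ =>
        (continuous_apply j).comp (continuous_apply i)) continuous_const
    have : ptFeas Γ0 Γ1 = _ ∩ (_ ∩ _) := rfl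
    exact (h1.inter (h2.inter h3))
  · rintro Γ ⟨hpos, hcol, -⟩ 
    intro i _ j _
    refine ⟨hpos i j, ?_⟩
    fin_cases i
    · exact le_trans (by nlinarith [hpos 1 j] : Γ 0 j ≤ Γ 0 j + Γ 1 j) (hcol j)
    · exact le_trans (by nlinarith [hpos 0 j] : Γ 1 j ≤ Γ 0 j + Γ 1 j) (hcol j)

end Aux
private lemma sum_ind {J : ℕ} (j j' : Fin J) (w : Fin J → ℝ) :
    ∑ k, w k * ((if k = j then (1:ℝ) else 0) - (if k = j' then 1 else 0)) = w j - w j' := by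
  simp [mul_sub, Finset.sum_sub_distrib, mul_ite, mul_one, mul_zero, Finset.sum_ite_eq']

private lemma swap_row {J : ℕ} (j j' : Fin J) (c : ℝ) (Γrow : Fin J → ℝ) :
    ∑ k, (Γrow k + c * ((if k = j then (1:ℝ) else 0) - (if k = j' then 1 else 0)))
      = ∑ k, Γrow k := by
  rw [Finset.sum_add_distrib, ← Finset.mul_sum]
  simp [Finset.sum_sub_distrib, Finset.sum_ite_eq']

private lemma swap_cost {J : ℕ} (j j' : Fin J) (δ : ℝ)
    (π Γ : Fin 2 → Fin J → ℝ) :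
    ∑ i, ∑ k, π i k * (Γ i k +
        (if i = 0 then δ else -δ) * ((if k = j then (1:ℝ) else 0) - (if k = j' then 1 else 0)))
      = (∑ i, ∑ k, π i k * Γ i k) + δ * ((π 0 j - π 0 j') - (π 1 j - π 1 j')) := by
  have hrow : ∀ (i : Fin 2) (c : ℝ),
      ∑ k, π i k * (Γ i k + c * ((if k = j then (1:ℝ) else 0) - (if k = j' then 1 else 0)))
        = ∑ k, π i k * Γ i k + c * (π i j - π i j') := by
    intro i c
    have : ∀ k ∈ Finset.univ, π i k * (Γ i k + c * ((if k = j then (1:ℝ) else 0) - (if k = j' then 1 else 0)))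
        = π i k * Γ i k + (c * π i k) * ((if k = j then (1:ℝ) else 0) - (if k = j' then 1 else 0)) := by
      intro k _; ring
    rw [Finset.sum_congr rfl this, Finset.sum_add_distrib, sum_ind j j' (fun k => c * π i k)]
    ring
  rw [Fin.sum_univ_two, Fin.sum_univ_two, hrow 0, hrow 1]
  norm_num
  ring

private lemma swap_g {J : ℕ} (j j' : Fin J) (δ : ℝ) (Γ : Fin 2 → Fin J → ℝ) :
    ∑ k : Fin J, (k : ℝ) * ((Γ 0 k +
        δ * ((if k = j then (1:ℝ) else 0) - (if k = j' then 1 else 0))) -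
      (Γ 1 k + (-δ) * ((if k = j then (1:ℝ) else 0) - (if k = j' then 1 else 0))))
      = (∑ k : Fin J, (k : ℝ) * (Γ 0 k - Γ 1 k)) + 2 * δ * ((j : ℝ) - (j' : ℝ)) := by
  have : ∀ k : Fin J, k ∈ Finset.univ → (k : ℝ) * ((Γ 0 k +
        δ * ((if k = j then (1:ℝ) else 0) - (if k = j' then 1 else 0))) -
      (Γ 1 k + (-δ) * ((if k = j then (1:ℝ) else 0) - (if k = j' then 1 else 0))))
      = (k : ℝ) * (Γ 0 k - Γ 1 k) +
        (2 * δ * (k : ℝ)) * ((if k = j then (1:ℝ) else 0) - (if k = j' then 1 else 0)) := by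
    intro k _; ring
  rw [Finset.sum_congr rfl this, Finset.sum_add_distrib, sum_ind j j' (fun k => 2 * δ * (k:ℝ))]
  ring

/-- Lemma 4 (monotone-support lemma for the optimal partial transport problem): given submodular
costs `π(i,j)`, nonnegative capacities `Γ0(j)` and nonnegative demands `Γ1(i)` with
`Γ1(0) + Γ1(1) ≤ ∑_j Γ0(j)`, the feasible set of the partial transport linear program is
nonempty and admits a minimizer with monotone support. -/
theorem partial_transport_monotone_support
    {J : ℕ} (hJ : 1 ≤ J)
    (π : Fin 2 → Fin J → ℝ)
    (Γ0 : Fin J → ℝ) (hΓ0 : ∀ j, 0 ≤ Γ0 j)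
    (Γ1 : Fin 2 → ℝ) (hΓ1 : ∀ i, 0 ≤ Γ1 i)
    (hmass : Γ1 0 + Γ1 1 ≤ ∑ j, Γ0 j)
    (hsub : ∀ j j' : Fin J, j' < j → π 1 j - π 0 j - π 1 j' + π 0 j' ≤ 0) :
    {Γ : Fin 2 → Fin J → ℝ |
        (∀ i j, 0 ≤ Γ i j) ∧ (∀ j, Γ 0 j + Γ 1 j ≤ Γ0 j) ∧ (∀ i, ∑ j, Γ i j = Γ1 i)}.Nonempty ∧
      ∃ Γstar ∈ {Γ : Fin 2 → Fin J → ℝ |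
          (∀ i j, 0 ≤ Γ i j) ∧ (∀ j, Γ 0 j + Γ 1 j ≤ Γ0 j) ∧ (∀ i, ∑ j, Γ i j = Γ1 i)},
        (∀ Γ ∈ {Γ : Fin 2 → Fin J → ℝ |
            (∀ i j, 0 ≤ Γ i j) ∧ (∀ j, Γ 0 j + Γ 1 j ≤ Γ0 j) ∧ (∀ i, ∑ j, Γ i j = Γ1 i)},
          (∑ i, ∑ j, π i j * Γstar i j) ≤ ∑ i, ∑ j, π i j * Γ i j) ∧
        ∃ Jstar : Fin J, (∀ j, j < Jstar → Γstar 1 j = 0) ∧ (∀ j, Jstar < j → Γstar 0 j = 0) := by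
  classical
  have hne : (ptFeas Γ0 Γ1).Nonempty := ptFeas_nonempty Γ0 hΓ0 Γ1 hΓ1 hmass
  have hcpt : IsCompact (ptFeas Γ0 Γ1) := ptFeas_isCompact Γ0 hΓ0 Γ1
  set f : (Fin 2 → Fin J → ℝ) → ℝ := fun Γ => ∑ i, ∑ k, π i k * Γ i k with hf
  have hfc : Continuous f :=
    continuous_finset_sum _ fun i _ => continuous_finset_sum _ fun k _ =>
      continuous_const.mul ((continuous_apply k).comp (continuous_apply i))
  obtain ⟨Γm, hΓmS, hΓmmin⟩ := hcpt.exists_isMinOn hne hfc.continuousOn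
  set M : Set (Fin 2 → Fin J → ℝ) := ptFeas Γ0 Γ1 ∩ f ⁻¹' Set.Iic (f Γm) with hM
  have hMcpt : IsCompact M := hcpt.inter_right (isClosed_Iic.preimage hfc)
  have hMne : M.Nonempty := ⟨Γm, hΓmS, Set.mem_preimage.mpr (Set.mem_Iic.mpr le_rfl)⟩
  set g : (Fin 2 → Fin J → ℝ) → ℝ := fun Γ => ∑ k : Fin J, (k : ℝ) * (Γ 0 k - Γ 1 k) with hg
  have hgc : Continuous g :=
    continuous_finset_sum _ fun k _ => continuous_const.mul
      (Continuous.sub (f := fun Γ : Fin 2 → Fin J → ℝ => Γ 0 k) (g := fun Γ => Γ 1 k) ((continuous_apply k).comp (continuous_apply 0))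
        ((continuous_apply k).comp (continuous_apply 1)))
  obtain ⟨Γs, hΓsM, hΓsmin⟩ := hMcpt.exists_isMinOn hMne hgc.continuousOn
  have hΓsS : Γs ∈ ptFeas Γ0 Γ1 := hΓsM.1
  have hfs : ∀ Γ ∈ ptFeas Γ0 Γ1, f Γs ≤ f Γ := fun Γ hΓ => le_trans hΓsM.2 (hΓmmin hΓ)
  -- no crossing in Γs
  have hcross : ∀ j j' : Fin J, j < j' → Γs 1 j = 0 ∨ Γs 0 j' = 0 := by
    intro j j' hlt
    by_contra hcon
    push_neg at hcon
    have h1 : 0 < Γs 1 j := lt_of_le_of_ne (hΓsS.1 1 j) (Ne.symm hcon.1)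
    have h0 : 0 < Γs 0 j' := lt_of_le_of_ne (hΓsS.1 0 j') (Ne.symm hcon.2)
    set δ : ℝ := min (Γs 1 j) (Γs 0 j') with hδ
    have hδpos : 0 < δ := lt_min h1 h0
    set Γ' : Fin 2 → Fin J → ℝ := fun i k => Γs i k +
      (if i = 0 then δ else -δ) * ((if k = j then (1:ℝ) else 0) - (if k = j' then 1 else 0))
      with hΓ'def
    have hΓ'S : Γ' ∈ ptFeas Γ0 Γ1 := by
      refine ⟨?_, ?_, ?_⟩
      · intro i k
        by_cases hkj : k = j
        · subst hkj
          by_cases hi : i = 0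
          · subst hi
            simp only [hΓ'def, if_pos rfl, if_neg (ne_of_lt hlt)]
            norm_num
            nlinarith [hΓsS.1 0 k, hδpos]
          · have hi1 : i = 1 := by omega
            subst hi1
            simp only [hΓ'def, if_neg hi, if_neg (ne_of_lt hlt)]
            norm_num
            have := min_le_left (Γs 1 k) (Γs 0 j')
            simp only [← hδ] at this
            nlinarith
        · by_cases hkj' : k = j'
          · subst hkj'
            by_cases hi : i = 0
            · subst hi
              simp only [hΓ'def, if_pos rfl, if_neg hkj]
              norm_num
              have := min_le_right (Γs 1 j) (Γs 0 k)
              simp only [← hδ] at this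
              nlinarith
            · have hi1 : i = 1 := by omega
              subst hi1
              simp only [hΓ'def, if_neg hi, if_neg hkj]
              norm_num
              nlinarith [hΓsS.1 1 k, hδpos]
          · have : Γ' i k = Γs i k := by
              simp [hΓ'def, hkj, hkj']
            rw [this]; exact hΓsS.1 i k
      · intro k
        have hcol : Γ' 0 k + Γ' 1 k = Γs 0 k + Γs 1 k := by
          simp only [hΓ'def]
          norm_num
          ring
        rw [hcol]; exact hΓsS.2.1 k
      · intro i
        calc ∑ k, Γ' i k = ∑ k, Γs i k := swap_row j j' _ (Γs i)
          _ = Γ1 i := hΓsS.2.2 i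
    have hcost : f Γ' = f Γs + δ * ((π 0 j - π 0 j') - (π 1 j - π 1 j')) := by
      simp only [hf, hΓ'def]
      exact swap_cost j j' δ π Γs
    have hsub' := hsub j' j hlt
    have hcost' : f Γ' ≤ f Γs := by nlinarith
    have hΓ'M : Γ' ∈ M := ⟨hΓ'S, le_trans hcost' hΓsM.2⟩
    have hgΓ' : g Γ' = g Γs + 2 * δ * ((j : ℝ) - (j' : ℝ)) := by
      simp only [hg, hΓ'def]
      rw [← swap_g j j' δ Γs]
      refine Finset.sum_congr rfl fun k _ => ?_
      norm_num
      try ring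
    have hjlt : (j : ℝ) < (j' : ℝ) := by exact_mod_cast hlt
    have hgless : g Γ' < g Γs := by nlinarith
    exact absurd (hΓsmin hΓ'M) (not_le.mpr hgless)
  -- extract Jstar
  have hJstar : ∃ Jstar : Fin J, (∀ j, j < Jstar → Γs 1 j = 0) ∧ (∀ j, Jstar < j → Γs 0 j = 0) := by
    by_cases hz : ∀ j, Γs 1 j = 0
    · refine ⟨⟨J - 1, by omega⟩, fun j _ => hz j, fun j hj => absurd hj ?_⟩
      have := j.isLt
      simp only [not_lt, Fin.le_def]
      omega
    · push_neg at hz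
      obtain ⟨j0, hj0⟩ := hz
      set T : Finset (Fin J) := Finset.univ.filter (fun j => Γs 1 j ≠ 0) with hT
      have hTne : T.Nonempty := ⟨j0, by simp [hT, hj0]⟩
      refine ⟨T.min' hTne, fun j hj => ?_, fun j hj => ?_⟩
      · by_contra hjne
        exact absurd (T.min'_le j (by simp [hT, hjne])) (not_le.mpr hj)
      · have hmem : Γs 1 (T.min' hTne) ≠ 0 := by
          have := T.min'_mem hTne
          simp [hT] at this
          exact this
        rcases hcross (T.min' hTne) j hj with h | h
        · exact absurd h hmem
        · exact h
  obtain ⟨Jstar, hJ1, hJ2⟩ := hJstar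
  exact ⟨hne, Γs, hΓsS, fun Γ hΓ => hfs Γ hΓ, Jstar, hJ1, hJ2⟩
end

section
/- Consider the true-positive-rate-disparity model: Y1 = (Y1s, Y1r) ∈ {0,1}² and Y0 ∈ {a_1, …, a_J} (J ≥ 2). Let X be a standard Borel space with probability measure μ_X, κ1 a kernel from X to probability measures on {0,1}², κ0 a kernel from X to probability measures on {a_1,…,a_J}, and μ1X, μ0X the induced joint laws. For a class a_ℓ set P11(x) := κ1(x)({(1,1)}), P01(x) := κ1(x)({(0,1)}), P_ℓ(x) := κ0(x)({a_ℓ}), and define the Fréchet bounds θ^U_{ℓ,1} := ∫ min{P11, P_ℓ} dμ_X, θ^L_{ℓ,1} := ∫ max{P11 + P_ℓ − 1, 0} dμ_X, θ^U_{ℓ,0} := ∫ min{P01, P_ℓ} dμ_X, θ^L_{ℓ,0} := ∫ max{P01 + P_ℓ − 1, 0} dμ_X. Fix distinct classes a_j ≠ a_{j†} and assume θ^L_{j,1} + θ^L_{j,0} > 0 and θ^L_{j†,1} + θ^L_{j†,0} > 0. Then the identified set of the true-positive-rate disparity, { μ({y1=(1,1), y0=a_j}) / μ({y1r=1, y0=a_j})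 − μ({y1=(1,1), y0=a_{j†}}) / μ({y1r=1, y0=a_{j†}}) : μ ∈ M(μ1X, μ0X) }, equals the closed interval [δ^L, δ^U] with δ^U = θ^U_{j,1}/(θ^U_{j,1} + θ^L_{j,0}) − θ^L_{j†,1}/(θ^L_{j†,1} + θ^U_{j†,0}) and δ^L = θ^L_{j,1}/(θ^L_{j,1} + θ^U_{j,0}) − θ^U_{j†,1}/(θ^U_{j†,1} + θ^L_{j†,0}) (Corollary 2 for the TPRD measure, valid for any number J ≥ 2 of protected classes). -/
set_option maxHeartbeats 1600000

open MeasureTheory ProbabilityTheory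
open scoped ENNReal NNReal

/-! ### Scalar 3×3 transport matrix -/

noncomputable def nmat (p₁ p₂ q₁ q₂ : ℝ) : Fin 3 → Fin 3 → ℝ :=
  let q₃ := 1 - q₁ - q₂
  let n00 := min p₁ q₁
  let n02 := min (max (p₁ - q₁) 0) q₃
  let n01 := max (p₁ + q₂ - 1) 0
  let n11 := min p₂ q₂
  let n12 := min (p₂ - n11) (q₃ - n02)
  let n10 := max (p₂ + q₁ - 1) 0
  ![![n00, n01, n02], ![n10, n11, n12],
    ![q₁ - n00 - n10, q₂ - n01 - n11, q₃ - n02 - n12]]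

lemma fin3_mk0 (h : 0 < 3) : (⟨0, h⟩ : Fin 3) = 0 := rfl
lemma fin3_mk1 (h : 1 < 3) : (⟨1, h⟩ : Fin 3) = 1 := rfl
lemma fin3_mk2 (h : 2 < 3) : (⟨2, h⟩ : Fin 3) = 2 := rfl

section scalar

variable {p₁ p₂ q₁ q₂ : ℝ}

lemma nmat_nonneg (hp₁ : 0 ≤ p₁) (hp₂ : 0 ≤ p₂) (hp : p₁ + p₂ ≤ 1)
    (hq₁ : 0 ≤ q₁) (hq₂ : 0 ≤ q₂) (hq : q₁ + q₂ ≤ 1) (a b : Fin 3) :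
    0 ≤ nmat p₁ p₂ q₁ q₂ a b := by
  fin_cases a <;> fin_cases b <;> simp [nmat] <;>
    rcases le_total p₁ q₁ with h1 | h1 <;> rcases le_total p₂ q₂ with h2 | h2 <;>
    rcases le_total (p₁ + q₂) 1 with h3 | h3 <;> rcases le_total (p₂ + q₁) 1 with h4 | h4 <;>
    (try simp [min_def, max_def]) <;> (try split_ifs) <;>
    first
      | linarith
      | (left; linarith)
      | (right; linarith)
      | (constructor <;> linarith)

lemma nmat_row (hp₁ : 0 ≤ p₁) (hp₂ : 0 ≤ p₂) (hp : p₁ + p₂ ≤ 1)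
    (hq₁ : 0 ≤ q₁) (hq₂ : 0 ≤ q₂) (hq : q₁ + q₂ ≤ 1) (a : Fin 3) :
    nmat p₁ p₂ q₁ q₂ a 0 + nmat p₁ p₂ q₁ q₂ a 1 + nmat p₁ p₂ q₁ q₂ a 2 =
      (if a = 0 then p₁ else if a = 1 then p₂ else 1 - p₁ - p₂) := by
  fin_cases a <;> simp [nmat] <;>
    rcases le_total p₁ q₁ with h1 | h1 <;> rcases le_total p₂ q₂ with h2 | h2 <;>
    rcases le_total (p₁ + q₂) 1 with h3 | h3 <;> rcases le_total (p₂ + q₁) 1 with h4 | h4 <;>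
    (try simp [min_def, max_def]) <;> (try split_ifs) <;>
    first
      | linarith
      | (left; linarith)
      | (right; linarith)
      | (constructor <;> linarith)

lemma nmat_col (a : Fin 3) :
    nmat p₁ p₂ q₁ q₂ 0 a + nmat p₁ p₂ q₁ q₂ 1 a + nmat p₁ p₂ q₁ q₂ 2 a =
      (if a = 0 then q₁ else if a = 1 then q₂ else 1 - q₁ - q₂) := by
  fin_cases a <;> simp [nmat] <;> ring

lemma nmat00 : nmat p₁ p₂ q₁ q₂ 0 0 = min p₁ q₁ := by simp [nmat]
lemma nmat01 : nmat p₁ p₂ q₁ q₂ 0 1 = max (p₁ + q₂ - 1) 0 := by simp [nmat]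
lemma nmat10 : nmat p₁ p₂ q₁ q₂ 1 0 = max (p₂ + q₁ - 1) 0 := by simp [nmat]
lemma nmat11 : nmat p₁ p₂ q₁ q₂ 1 1 = min p₂ q₂ := by simp [nmat]

lemma nmat_le_row (hp₁ : 0 ≤ p₁) (hp₂ : 0 ≤ p₂) (hp : p₁ + p₂ ≤ 1)
    (hq₁ : 0 ≤ q₁) (hq₂ : 0 ≤ q₂) (hq : q₁ + q₂ ≤ 1) (a b : Fin 3) :
    nmat p₁ p₂ q₁ q₂ a b ≤ (if a = 0 then p₁ else if a = 1 then p₂ else 1 - p₁ - p₂) := by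
  rw [← nmat_row hp₁ hp₂ hp hq₁ hq₂ hq a]
  have h0 := nmat_nonneg hp₁ hp₂ hp hq₁ hq₂ hq a 0
  have h1 := nmat_nonneg hp₁ hp₂ hp hq₁ hq₂ hq a 1
  have h2 := nmat_nonneg hp₁ hp₂ hp hq₁ hq₂ hq a 2
  fin_cases b <;> simp only [fin3_mk0, fin3_mk1, fin3_mk2] <;> linarith

lemma nmat_le_col (hp₁ : 0 ≤ p₁) (hp₂ : 0 ≤ p₂) (hp : p₁ + p₂ ≤ 1)
    (hq₁ : 0 ≤ q₁) (hq₂ : 0 ≤ q₂) (hq : q₁ + q₂ ≤ 1) (a b : Fin 3) :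
    nmat p₁ p₂ q₁ q₂ a b ≤ (if b = 0 then q₁ else if b = 1 then q₂ else 1 - q₁ - q₂) := by
  rw [← nmat_col (p₁ := p₁) (p₂ := p₂) b]
  have h0 := nmat_nonneg hp₁ hp₂ hp hq₁ hq₂ hq 0 b
  have h1 := nmat_nonneg hp₁ hp₂ hp hq₁ hq₂ hq 1 b
  have h2 := nmat_nonneg hp₁ hp₂ hp hq₁ hq₂ hq 2 b
  fin_cases a <;> simp only [fin3_mk0, fin3_mk1, fin3_mk2] <;> linarith

lemma nmat_meas {α : Type*} [MeasurableSpace α] {f1 f2 f3 f4 : α → ℝ}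
    (h1 : Measurable f1) (h2 : Measurable f2) (h3 : Measurable f3) (h4 : Measurable f4)
    (a b : Fin 3) :
    Measurable fun x => nmat (f1 x) (f2 x) (f3 x) (f4 x) a b := by
  fin_cases a <;> fin_cases b <;> simp only [nmat, Matrix.cons_val_zero, Matrix.cons_val_one,
    Matrix.head_cons, Matrix.cons_val_two, Matrix.tail_cons] <;> measurability

end scalar

/-! ### ENNReal helpers -/

section ennreal

lemma toReal_cell_sub {a b : ℝ≥0∞} (ha : a ≠ ⊤) (hb : b ≠ ⊤) :
    (a + b - 1).toReal = max (a.toReal + b.toReal - 1) 0 := by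
  have hab : a + b ≠ ⊤ := ENNReal.add_ne_top.2 ⟨ha, hb⟩
  have habt : (a + b).toReal = a.toReal + b.toReal := ENNReal.toReal_add ha hb
  rcases le_total (a + b) 1 with h | h
  · have h0 : a + b - 1 = 0 := tsub_eq_zero_of_le h
    have h1 : a.toReal + b.toReal ≤ 1 := by
      rw [← habt]
      simpa using ENNReal.toReal_mono (by simp) h
    rw [h0]
    simp [max_eq_right, h1]
  · have h1 : (1:ℝ) ≤ a.toReal + b.toReal := by
      rw [← habt]
      simpa using ENNReal.toReal_mono hab h
    rw [ENNReal.toReal_sub_of_le h hab]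
    simp only [ENNReal.toReal_one, habt]
    rw [max_eq_left (by linarith)]

lemma ofReal_cell_sub {a b : ℝ≥0∞} (ha : a ≠ ⊤) (hb : b ≠ ⊤) :
    ENNReal.ofReal (max (a.toReal + b.toReal - 1) 0) = a + b - 1 := by
  rw [← toReal_cell_sub ha hb, ENNReal.ofReal_toReal]
  exact ne_top_of_le_ne_top (ENNReal.add_ne_top.2 ⟨ha, hb⟩) tsub_le_self

lemma ofReal_cell_min {a b : ℝ≥0∞} (ha : a ≠ ⊤) (hb : b ≠ ⊤) :
    ENNReal.ofReal (min a.toReal b.toReal) = min a b := by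
  rw [← ENNReal.toReal_min ha hb, ENNReal.ofReal_toReal]
  exact ne_top_of_le_ne_top ha (min_le_left _ _)

lemma cell_sub_le_min {a b : ℝ≥0∞} (ha : a ≤ 1) (hb : b ≤ 1) :
    a + b - 1 ≤ min a b := by
  rcases le_total a b with h | h
  · rw [min_eq_left h, tsub_le_iff_right]
    exact add_le_add le_rfl hb
  · rw [min_eq_right h, tsub_le_iff_right, add_comm a b]
    exact add_le_add le_rfl ha

lemma sum_meas_singleton {K : Type*} [Fintype K] [MeasurableSpace K]
    [MeasurableSingletonClass K] (ν : Measure K) : ∑ k : K, ν {k} = ν Set.univ := by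
  rw [← tsum_fintype (L := SummationFilter.unconditional _), ← measure_iUnion (fun a b hab => Set.disjoint_singleton.2 hab)
    (fun k => measurableSet_singleton k), Set.iUnion_of_singleton]

lemma measure_ext_prod {K X : Type*} [MeasurableSpace K] [MeasurableSingletonClass K]
    [Countable K] [MeasurableSpace X] {μ ν : Measure (K × X)}
    (h : ∀ (k : K) (S : Set X), MeasurableSet S → μ ({k} ×ˢ S) = ν ({k} ×ˢ S)) : μ = ν := by
  ext E hE
  have hde : E = ⋃ k : K, {k} ×ˢ (Prod.mk k ⁻¹' E) := by
    ext ⟨k, x⟩; simp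
  have hdis : Pairwise (Function.onFun Disjoint
      fun k : K => ({k} ×ˢ (Prod.mk k ⁻¹' E) : Set (K × X))) := by
    intro k k' hkk'
    simp only [Function.onFun, Set.disjoint_left]
    rintro ⟨a, x⟩ ⟨ha, _⟩ ⟨ha', _⟩
    simp only [Set.mem_singleton_iff] at ha ha'
    exact hkk' (ha ▸ ha')
  have hm : ∀ k : K, MeasurableSet ({k} ×ˢ (Prod.mk k ⁻¹' E) : Set (K × X)) :=
    fun k => (measurableSet_singleton k).prod (hE.preimage measurable_prodMk_left)
  rw [hde, measure_iUnion hdis hm, measure_iUnion hdis hm]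
  exact tsum_congr fun k => h k _ (hE.preimage measurable_prodMk_left)

end ennreal
/-! ### Densities from kernels -/

section kernels

variable {J : ℕ} {X : Type*} [MeasurableSpace X]

noncomputable def pker (κ1 : Kernel X (Fin 2 × Fin 2)) (r : Fin 2 × Fin 2) (x : X) : ℝ :=
  (κ1 x {r}).toReal

noncomputable def qker (κ0 : Kernel X (Fin J)) (c : Fin J) (x : X) : ℝ :=
  (κ0 x {c}).toReal

lemma pker_nonneg (κ1 : Kernel X (Fin 2 × Fin 2)) (r : Fin 2 × Fin 2) (x : X) :
    0 ≤ pker κ1 r x := ENNReal.toReal_nonneg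

lemma qker_nonneg (κ0 : Kernel X (Fin J)) (c : Fin J) (x : X) :
    0 ≤ qker κ0 c x := ENNReal.toReal_nonneg

lemma pker_meas (κ1 : Kernel X (Fin 2 × Fin 2)) (r : Fin 2 × Fin 2) :
    Measurable (pker κ1 r) :=
  (κ1.measurable_coe (measurableSet_singleton r)).ennreal_toReal

lemma qker_meas (κ0 : Kernel X (Fin J)) (c : Fin J) :
    Measurable (qker κ0 c) :=
  (κ0.measurable_coe (measurableSet_singleton c)).ennreal_toReal

lemma pker_sum' (κ1 : Kernel X (Fin 2 × Fin 2)) [IsMarkovKernel κ1] (x : X) :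
    ∑ r : Fin 2 × Fin 2, pker κ1 r x = 1 := by
  have h := sum_meas_singleton (κ1 x)
  rw [measure_univ] at h
  have := ENNReal.toReal_sum (s := Finset.univ)
    (f := fun r : Fin 2 × Fin 2 => κ1 x {r}) (fun a _ => measure_ne_top _ _)
  rw [h] at this
  simpa [pker] using this.symm

lemma qker_sum' (κ0 : Kernel X (Fin J)) [IsMarkovKernel κ0] (x : X) :
    ∑ c : Fin J, qker κ0 c x = 1 := by
  have h := sum_meas_singleton (κ0 x)
  rw [measure_univ] at h
  have := ENNReal.toReal_sum (s := Finset.univ)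
    (f := fun c : Fin J => κ0 x {c}) (fun a _ => measure_ne_top _ _)
  rw [h] at this
  simpa [qker] using this.symm

lemma pker_sum (κ1 : Kernel X (Fin 2 × Fin 2)) [IsMarkovKernel κ1] (x : X) :
    pker κ1 (0,0) x + pker κ1 (0,1) x + pker κ1 (1,0) x + pker κ1 (1,1) x = 1 := by
  have h := pker_sum' κ1 x
  rw [Fintype.sum_prod_type] at h
  simp only [Fin.sum_univ_two] at h
  linarith

lemma qker_pair_le (κ0 : Kernel X (Fin J)) [IsMarkovKernel κ0] {j j' : Fin J}
    (hjj' : j ≠ j') (x : X) : qker κ0 j x + qker κ0 j' x ≤ 1 := by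
  have h := qker_sum' κ0 x
  have hs : ({j, j'} : Finset (Fin J)) ⊆ Finset.univ := Finset.subset_univ _
  have := Finset.sum_le_sum_of_subset_of_nonneg hs
    (fun c _ _ => qker_nonneg κ0 c x)
  rw [Finset.sum_pair hjj', h] at this
  exact this

lemma qker_triple_le (κ0 : Kernel X (Fin J)) [IsMarkovKernel κ0] {j j' c : Fin J}
    (hjj' : j ≠ j') (hcj : c ≠ j) (hcj' : c ≠ j') (x : X) :
    qker κ0 c x + qker κ0 j x + qker κ0 j' x ≤ 1 := by
  have h := qker_sum' κ0 x
  have hs : ({c, j, j'} : Finset (Fin J)) ⊆ Finset.univ := Finset.subset_univ _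
  have hle := Finset.sum_le_sum_of_subset_of_nonneg hs
    (fun c _ _ => qker_nonneg κ0 c x)
  rw [h] at hle
  rw [Finset.sum_insert (by simp [hcj, hcj']), Finset.sum_pair hjj'] at hle
  linarith

/-- facts bundle -/
lemma pq_facts (κ1 : Kernel X (Fin 2 × Fin 2)) [IsMarkovKernel κ1]
    (κ0 : Kernel X (Fin J)) [IsMarkovKernel κ0] {j j' : Fin J} (hjj' : j ≠ j') (x : X) :
    0 ≤ pker κ1 (1,1) x ∧ 0 ≤ pker κ1 (0,1) x ∧ pker κ1 (1,1) x + pker κ1 (0,1) x ≤ 1 ∧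
      0 ≤ qker κ0 j x ∧ 0 ≤ qker κ0 j' x ∧ qker κ0 j x + qker κ0 j' x ≤ 1 := by
  have h := pker_sum κ1 x
  have h1 := pker_nonneg κ1 (0,0) x
  have h2 := pker_nonneg κ1 (1,0) x
  exact ⟨pker_nonneg κ1 _ x, pker_nonneg κ1 _ x, by linarith,
    qker_nonneg κ0 _ x, qker_nonneg κ0 _ x, qker_pair_le κ0 hjj' x⟩

/-! ### Row/column class maps and the full density matrix -/

def rcl (r : Fin 2 × Fin 2) : Fin 3 := if r = (1,1) then 0 else if r = (0,1) then 1 else 2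

def cclf (j j' c : Fin J) : Fin 3 := if c = j then 0 else if c = j' then 1 else 2

noncomputable def paf (κ1 : Kernel X (Fin 2 × Fin 2)) (a : Fin 3) (x : X) : ℝ :=
  if a = 0 then pker κ1 (1,1) x else if a = 1 then pker κ1 (0,1) x
  else 1 - pker κ1 (1,1) x - pker κ1 (0,1) x

noncomputable def qbf (κ0 : Kernel X (Fin J)) (j j' : Fin J) (b : Fin 3) (x : X) : ℝ :=
  if b = 0 then qker κ0 j x else if b = 1 then qker κ0 j' x
  else 1 - qker κ0 j x - qker κ0 j' x

noncomputable def mf (κ1 : Kernel X (Fin 2 × Fin 2)) (κ0 : Kernel X (Fin J))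
    (j j' : Fin J) (r : Fin 2 × Fin 2) (c : Fin J) (x : X) : ℝ :=
  nmat (pker κ1 (1,1) x) (pker κ1 (0,1) x) (qker κ0 j x) (qker κ0 j' x) (rcl r) (cclf j j' c)
    * (pker κ1 r x / paf κ1 (rcl r) x) * (qker κ0 c x / qbf κ0 j j' (cclf j j' c) x)

variable (κ1 : Kernel X (Fin 2 × Fin 2)) [IsMarkovKernel κ1]
  (κ0 : Kernel X (Fin J)) [IsMarkovKernel κ0] (j j' : Fin J)

lemma paf_meas (a : Fin 3) : Measurable (paf κ1 a) := by
  unfold paf; split_ifs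
  · exact pker_meas κ1 _
  · exact pker_meas κ1 _
  · exact (measurable_const.sub (pker_meas κ1 _)).sub (pker_meas κ1 _)

lemma qbf_meas (b : Fin 3) : Measurable (qbf κ0 j j' b) := by
  unfold qbf; split_ifs
  · exact qker_meas κ0 _
  · exact qker_meas κ0 _
  · exact (measurable_const.sub (qker_meas κ0 _)).sub (qker_meas κ0 _)

lemma mf_meas (r : Fin 2 × Fin 2) (c : Fin J) : Measurable (mf κ1 κ0 j j' r c) :=
  ((nmat_meas (pker_meas κ1 _) (pker_meas κ1 _) (qker_meas κ0 _) (qker_meas κ0 _) _ _).mul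
    ((pker_meas κ1 _).div (paf_meas κ1 _))).mul ((qker_meas κ0 _).div (qbf_meas κ0 j j' _))

lemma pker_le_paf (r : Fin 2 × Fin 2) (x : X) : pker κ1 r x ≤ paf κ1 (rcl r) x := by
  have h := pker_sum κ1 x
  have h1 := pker_nonneg κ1 (0,0) x
  have h2 := pker_nonneg κ1 (1,0) x
  obtain ⟨i, k⟩ := r
  fin_cases i <;> fin_cases k <;>
    simp [rcl, paf, Prod.ext_iff] at h h1 h2 ⊢ <;> linarith

lemma qker_le_qbf (hjj' : j ≠ j') (c : Fin J) (x : X) :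
    qker κ0 c x ≤ qbf κ0 j j' (cclf j j' c) x := by
  rcases eq_or_ne c j with hc | hc
  · subst hc; simp [cclf, qbf]
  rcases eq_or_ne c j' with hc' | hc'
  · subst hc'; simp [cclf, qbf, hc]
  have := qker_triple_le κ0 hjj' hc hc' x
  simp [cclf, qbf, hc, hc']
  linarith

lemma paf_nonneg (a : Fin 3) (x : X) : 0 ≤ paf κ1 a x := by
  have h := pker_sum κ1 x
  have h1 := pker_nonneg κ1 (0,0) x
  have h2 := pker_nonneg κ1 (1,0) x
  have h3 := pker_nonneg κ1 (1,1) x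
  have h4 := pker_nonneg κ1 (0,1) x
  unfold paf; split_ifs <;> linarith

lemma qbf_nonneg (hjj' : j ≠ j') (b : Fin 3) (x : X) : 0 ≤ qbf κ0 j j' b x := by
  have h := qker_pair_le κ0 hjj' x
  have h1 := qker_nonneg κ0 j x
  have h2 := qker_nonneg κ0 j' x
  unfold qbf; split_ifs <;> linarith

lemma mf_nonneg (hjj' : j ≠ j') (r : Fin 2 × Fin 2) (c : Fin J) (x : X) :
    0 ≤ mf κ1 κ0 j j' r c x := by
  obtain ⟨hp₁, hp₂, hp, hq₁, hq₂, hq⟩ := pq_facts κ1 κ0 hjj' x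
  exact mul_nonneg (mul_nonneg (nmat_nonneg hp₁ hp₂ hp hq₁ hq₂ hq _ _)
    (div_nonneg (pker_nonneg κ1 r x) (paf_nonneg κ1 _ x)))
    (div_nonneg (qker_nonneg κ0 c x) (qbf_nonneg κ0 j j' hjj' _ x))

end kernels
section matrixfacts

variable {J : ℕ} {X : Type*} [MeasurableSpace X]
  (κ1 : Kernel X (Fin 2 × Fin 2)) [IsMarkovKernel κ1]
  (κ0 : Kernel X (Fin J)) [IsMarkovKernel κ0] (j j' : Fin J)

lemma cclf_fiber0 (hjj' : j ≠ j') :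
    Finset.univ.filter (fun c => cclf j j' c = 0) = {j} := by
  ext c
  rw [Finset.mem_filter_univ]
  simp only [Finset.mem_filter, Finset.mem_univ, true_and, Finset.mem_singleton, cclf]
  split_ifs with h1 h2
  · simp [h1]
  · simp [h1]
  · simp [h1]

lemma cclf_fiber1 (hjj' : j ≠ j') :
    Finset.univ.filter (fun c => cclf j j' c = 1) = {j'} := by
  ext c
  rw [Finset.mem_filter_univ]
  simp only [Finset.mem_filter, Finset.mem_univ, true_and, Finset.mem_singleton, cclf]
  split_ifs with h1 h2
  · simp [h1, hjj']
  · simp [h2]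
  · simp [h2]

lemma cclf_fiber2 (hjj' : j ≠ j') :
    Finset.univ.filter (fun c => cclf j j' c = 2) = Finset.univ \ {j, j'} := by
  ext c
  rw [Finset.mem_filter_univ]
  simp only [Finset.mem_filter, Finset.mem_univ, true_and, Finset.mem_sdiff,
    Finset.mem_insert, Finset.mem_singleton, cclf]
  split_ifs with h1 h2
  · simp [h1]
  · simp [h1, h2]
  · simp [h1, h2]

lemma rcl_fiber0 : Finset.univ.filter (fun r : Fin 2 × Fin 2 => rcl r = 0) = {(1,1)} := by
  decide

lemma rcl_fiber1 : Finset.univ.filter (fun r : Fin 2 × Fin 2 => rcl r = 1) = {(0,1)} := by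
  decide

lemma rcl_fiber2 :
    Finset.univ.filter (fun r : Fin 2 × Fin 2 => rcl r = 2) = {(0,0),(1,0)} := by
  decide

lemma qbf_fiber (hjj' : j ≠ j') (b : Fin 3) (x : X) :
    ∑ c ∈ Finset.univ.filter (fun c => cclf j j' c = b), qker κ0 c x = qbf κ0 j j' b x := by
  fin_cases b <;> simp only [fin3_mk0, fin3_mk1, fin3_mk2]
  · rw [cclf_fiber0 j j' hjj', Finset.sum_singleton]; simp [qbf]
  · rw [cclf_fiber1 j j' hjj', Finset.sum_singleton]; simp [qbf]
  · rw [cclf_fiber2 j j' hjj', Finset.sum_sdiff_eq_sub (Finset.subset_univ _),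
      qker_sum' κ0 x, Finset.sum_pair hjj']
    simp [qbf]
    ring

lemma paf_fiber (a : Fin 3) (x : X) :
    ∑ r ∈ Finset.univ.filter (fun r : Fin 2 × Fin 2 => rcl r = a), pker κ1 r x
      = paf κ1 a x := by
  have h := pker_sum κ1 x
  fin_cases a <;> simp only [fin3_mk0, fin3_mk1, fin3_mk2]
  · rw [rcl_fiber0, Finset.sum_singleton]; simp [paf]
  · rw [rcl_fiber1, Finset.sum_singleton]; simp [paf]
  · rw [rcl_fiber2, Finset.sum_insert (by decide), Finset.sum_singleton]
    simp only [paf, if_neg (by decide : ¬(2:Fin 3) = 0), if_neg (by decide : ¬(2:Fin 3) = 1)]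
    linarith

lemma mf_rowsum (hjj' : j ≠ j') (r : Fin 2 × Fin 2) (x : X) :
    ∑ c, mf κ1 κ0 j j' r c x = pker κ1 r x := by
  obtain ⟨hp₁, hp₂, hp, hq₁, hq₂, hq⟩ := pq_facts κ1 κ0 hjj' x
  have key : ∀ c, mf κ1 κ0 j j' r c x =
      (nmat (pker κ1 (1,1) x) (pker κ1 (0,1) x) (qker κ0 j x) (qker κ0 j' x)
          (rcl r) (cclf j j' c)
        * (pker κ1 r x / paf κ1 (rcl r) x) / qbf κ0 j j' (cclf j j' c) x) * qker κ0 c x :=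
    fun c => by rw [mf]; ring
  rw [Finset.sum_congr rfl fun c _ => key c,
    ← Finset.sum_fiberwise Finset.univ (cclf j j')]
  have step : ∀ b : Fin 3, ∑ c ∈ Finset.univ.filter (fun c => cclf j j' c = b),
      (nmat (pker κ1 (1,1) x) (pker κ1 (0,1) x) (qker κ0 j x) (qker κ0 j' x)
          (rcl r) (cclf j j' c)
        * (pker κ1 r x / paf κ1 (rcl r) x) / qbf κ0 j j' (cclf j j' c) x) * qker κ0 c x
      = nmat (pker κ1 (1,1) x) (pker κ1 (0,1) x) (qker κ0 j x) (qker κ0 j' x) (rcl r) b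
        * (pker κ1 r x / paf κ1 (rcl r) x) := by
    intro b
    have hcg : ∀ c ∈ Finset.univ.filter (fun c => cclf j j' c = b),
        (nmat (pker κ1 (1,1) x) (pker κ1 (0,1) x) (qker κ0 j x) (qker κ0 j' x)
            (rcl r) (cclf j j' c)
          * (pker κ1 r x / paf κ1 (rcl r) x) / qbf κ0 j j' (cclf j j' c) x) * qker κ0 c x
        = (nmat (pker κ1 (1,1) x) (pker κ1 (0,1) x) (qker κ0 j x) (qker κ0 j' x) (rcl r) b
          * (pker κ1 r x / paf κ1 (rcl r) x) / qbf κ0 j j' b x) * qker κ0 c x :=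
      fun c hc => by rw [(Finset.mem_filter.1 hc).2]
    rw [Finset.sum_congr rfl hcg, ← Finset.mul_sum, qbf_fiber κ0 j j' hjj' b x]
    rcases eq_or_ne (qbf κ0 j j' b x) 0 with h | h
    · have hn : nmat (pker κ1 (1,1) x) (pker κ1 (0,1) x) (qker κ0 j x) (qker κ0 j' x)
          (rcl r) b = 0 := by
        have hle := nmat_le_col hp₁ hp₂ hp hq₁ hq₂ hq (rcl r) b
        have hge := nmat_nonneg hp₁ hp₂ hp hq₁ hq₂ hq (rcl r) b
        have hq0 : (if b = 0 then qker κ0 j x else if b = 1 then qker κ0 j' x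
            else 1 - qker κ0 j x - qker κ0 j' x) = qbf κ0 j j' b x := rfl
        rw [hq0, h] at hle
        linarith
      rw [h, hn]; ring
    · rw [div_mul_cancel₀ _ h]
  rw [Finset.sum_congr rfl fun b _ => step b, Fin.sum_univ_three, ← add_mul, ← add_mul,
    nmat_row hp₁ hp₂ hp hq₁ hq₂ hq (rcl r)]
  have hpa : (if rcl r = 0 then pker κ1 (1,1) x else if rcl r = 1 then pker κ1 (0,1) x
      else 1 - pker κ1 (1,1) x - pker κ1 (0,1) x) = paf κ1 (rcl r) x := rfl
  rw [hpa]
  rcases eq_or_ne (paf κ1 (rcl r) x) 0 with h | h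
  · have hp0 : pker κ1 r x = 0 :=
      le_antisymm (h ▸ pker_le_paf κ1 r x) (pker_nonneg κ1 r x)
    rw [h, hp0]; ring
  · rw [mul_comm, div_mul_cancel₀ _ h]

lemma mf_colsum (hjj' : j ≠ j') (c : Fin J) (x : X) :
    ∑ r : Fin 2 × Fin 2, mf κ1 κ0 j j' r c x = qker κ0 c x := by
  obtain ⟨hp₁, hp₂, hp, hq₁, hq₂, hq⟩ := pq_facts κ1 κ0 hjj' x
  have key : ∀ r : Fin 2 × Fin 2, mf κ1 κ0 j j' r c x =
      (nmat (pker κ1 (1,1) x) (pker κ1 (0,1) x) (qker κ0 j x) (qker κ0 j' x)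
          (rcl r) (cclf j j' c)
        * (qker κ0 c x / qbf κ0 j j' (cclf j j' c) x) / paf κ1 (rcl r) x) * pker κ1 r x :=
    fun r => by rw [mf]; ring
  rw [Finset.sum_congr rfl fun r _ => key r, ← Finset.sum_fiberwise Finset.univ rcl]
  have step : ∀ a : Fin 3, ∑ r ∈ Finset.univ.filter (fun r : Fin 2 × Fin 2 => rcl r = a),
      (nmat (pker κ1 (1,1) x) (pker κ1 (0,1) x) (qker κ0 j x) (qker κ0 j' x)
          (rcl r) (cclf j j' c)
        * (qker κ0 c x / qbf κ0 j j' (cclf j j' c) x) / paf κ1 (rcl r) x) * pker κ1 r x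
      = nmat (pker κ1 (1,1) x) (pker κ1 (0,1) x) (qker κ0 j x) (qker κ0 j' x) a (cclf j j' c)
        * (qker κ0 c x / qbf κ0 j j' (cclf j j' c) x) := by
    intro a
    have hcg : ∀ r ∈ Finset.univ.filter (fun r : Fin 2 × Fin 2 => rcl r = a),
        (nmat (pker κ1 (1,1) x) (pker κ1 (0,1) x) (qker κ0 j x) (qker κ0 j' x)
            (rcl r) (cclf j j' c)
          * (qker κ0 c x / qbf κ0 j j' (cclf j j' c) x) / paf κ1 (rcl r) x) * pker κ1 r x
        = (nmat (pker κ1 (1,1) x) (pker κ1 (0,1) x) (qker κ0 j x) (qker κ0 j' x)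
            a (cclf j j' c)
          * (qker κ0 c x / qbf κ0 j j' (cclf j j' c) x) / paf κ1 a x) * pker κ1 r x :=
      fun r hr => by rw [(Finset.mem_filter.1 hr).2]
    rw [Finset.sum_congr rfl hcg, ← Finset.mul_sum, paf_fiber κ1 a x]
    rcases eq_or_ne (paf κ1 a x) 0 with h | h
    · have hn : nmat (pker κ1 (1,1) x) (pker κ1 (0,1) x) (qker κ0 j x) (qker κ0 j' x)
          a (cclf j j' c) = 0 := by
        have hle := nmat_le_row hp₁ hp₂ hp hq₁ hq₂ hq a (cclf j j' c)
        have hge := nmat_nonneg hp₁ hp₂ hp hq₁ hq₂ hq a (cclf j j' c)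
        have hp0 : (if a = 0 then pker κ1 (1,1) x else if a = 1 then pker κ1 (0,1) x
            else 1 - pker κ1 (1,1) x - pker κ1 (0,1) x) = paf κ1 a x := rfl
        rw [hp0, h] at hle
        linarith
      rw [h, hn]; ring
    · rw [div_mul_cancel₀ _ h]
  rw [Finset.sum_congr rfl fun a _ => step a, Fin.sum_univ_three, ← add_mul, ← add_mul,
    nmat_col (cclf j j' c)]
  have hqb : (if cclf j j' c = 0 then qker κ0 j x else if cclf j j' c = 1 then qker κ0 j' x
      else 1 - qker κ0 j x - qker κ0 j' x) = qbf κ0 j j' (cclf j j' c) x := rfl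
  rw [hqb]
  rcases eq_or_ne (qbf κ0 j j' (cclf j j' c) x) 0 with h | h
  · have hq0 : qker κ0 c x = 0 :=
      le_antisymm (h ▸ qker_le_qbf κ0 j j' hjj' c x) (qker_nonneg κ0 c x)
    rw [h, hq0]; ring
  · rw [mul_comm, div_mul_cancel₀ _ h]

lemma rcl11 : rcl ((1 : Fin 2), (1 : Fin 2)) = 0 := by decide
lemma rcl01 : rcl ((0 : Fin 2), (1 : Fin 2)) = 1 := by decide

lemma mf_cell_11j (hjj' : j ≠ j') (x : X) :
    mf κ1 κ0 j j' (1,1) j x = min (pker κ1 (1,1) x) (qker κ0 j x) := by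
  obtain ⟨hp₁, hp₂, hp, hq₁, hq₂, hq⟩ := pq_facts κ1 κ0 hjj' x
  rw [mf, rcl11, show cclf j j' j = 0 by simp [cclf], nmat00,
    show paf κ1 0 x = pker κ1 (1,1) x by simp [paf],
    show qbf κ0 j j' 0 x = qker κ0 j x by simp [qbf]]
  rcases eq_or_ne (pker κ1 (1,1) x) 0 with h | h
  · rw [h, min_eq_left hq₁]; simp
  rcases eq_or_ne (qker κ0 j x) 0 with h' | h'
  · rw [h', min_eq_right hp₁]; simp
  · rw [div_self h, div_self h', mul_one, mul_one]

lemma mf_cell_11j' (hjj' : j ≠ j') (x : X) :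
    mf κ1 κ0 j j' (1,1) j' x = max (pker κ1 (1,1) x + qker κ0 j' x - 1) 0 := by
  obtain ⟨hp₁, hp₂, hp, hq₁, hq₂, hq⟩ := pq_facts κ1 κ0 hjj' x
  rw [mf, rcl11, show cclf j j' j' = 1 by simp [cclf, hjj'.symm], nmat01,
    show paf κ1 0 x = pker κ1 (1,1) x by simp [paf],
    show qbf κ0 j j' 1 x = qker κ0 j' x by simp [qbf]]
  rcases eq_or_ne (pker κ1 (1,1) x) 0 with h | h
  · rw [h, max_eq_right (by linarith)]; simp
  rcases eq_or_ne (qker κ0 j' x) 0 with h' | h'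
  · rw [h', max_eq_right (by linarith)]; simp
  · rw [div_self h, div_self h', mul_one, mul_one]

lemma mf_cell_01j (hjj' : j ≠ j') (x : X) :
    mf κ1 κ0 j j' (0,1) j x = max (pker κ1 (0,1) x + qker κ0 j x - 1) 0 := by
  obtain ⟨hp₁, hp₂, hp, hq₁, hq₂, hq⟩ := pq_facts κ1 κ0 hjj' x
  rw [mf, rcl01, show cclf j j' j = 0 by simp [cclf], nmat10,
    show paf κ1 1 x = pker κ1 (0,1) x by simp [paf],
    show qbf κ0 j j' 0 x = qker κ0 j x by simp [qbf]]
  rcases eq_or_ne (pker κ1 (0,1) x) 0 with h | h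
  · rw [h, max_eq_right (by linarith)]; simp
  rcases eq_or_ne (qker κ0 j x) 0 with h' | h'
  · rw [h', max_eq_right (by linarith)]; simp
  · rw [div_self h, div_self h', mul_one, mul_one]

lemma mf_cell_01j' (hjj' : j ≠ j') (x : X) :
    mf κ1 κ0 j j' (0,1) j' x = min (pker κ1 (0,1) x) (qker κ0 j' x) := by
  obtain ⟨hp₁, hp₂, hp, hq₁, hq₂, hq⟩ := pq_facts κ1 κ0 hjj' x
  rw [mf, rcl01, show cclf j j' j' = 1 by simp [cclf, hjj'.symm], nmat11,
    show paf κ1 1 x = pker κ1 (0,1) x by simp [paf],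
    show qbf κ0 j j' 1 x = qker κ0 j' x by simp [qbf]]
  rcases eq_or_ne (pker κ1 (0,1) x) 0 with h | h
  · rw [h, min_eq_left hq₂]; simp
  rcases eq_or_ne (qker κ0 j' x) 0 with h' | h'
  · rw [h', min_eq_right hp₂]; simp
  · rw [div_self h, div_self h', mul_one, mul_one]

end matrixfacts
/-! ### Marginal computations and Fréchet bounds for arbitrary couplings -/

section bounds

variable {J : ℕ} {X : Type*} [MeasurableSpace X]
  (μX : Measure X) [IsProbabilityMeasure μX]
  (κ1 : Kernel X (Fin 2 × Fin 2)) [IsMarkovKernel κ1]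
  (κ0 : Kernel X (Fin J)) [IsMarkovKernel κ0]

lemma marg1 (μ : Measure ((Fin 2 × Fin 2) × Fin J × X))
    (hm : μ.map (fun p => (p.1, p.2.2)) = (μX.compProd κ1).map Prod.swap)
    (T : Set (Fin 2 × Fin 2)) (S : Set X) (hS : MeasurableSet S) :
    μ {p : (Fin 2 × Fin 2) × Fin J × X | p.1 ∈ T ∧ p.2.2 ∈ S} = ∫⁻ x in S, κ1 x T ∂μX := by
  have hT : MeasurableSet T := (Set.to_countable T).measurableSet
  have hf : Measurable fun p : (Fin 2 × Fin 2) × Fin J × X => (p.1, p.2.2) :=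
    measurable_fst.prodMk measurable_snd.snd
  have hset : {p : (Fin 2 × Fin 2) × Fin J × X | p.1 ∈ T ∧ p.2.2 ∈ S}
      = (fun p : (Fin 2 × Fin 2) × Fin J × X => (p.1, p.2.2)) ⁻¹' (T ×ˢ S) := by
    ext p; simp [Set.mem_prod]
  rw [hset, ← Measure.map_apply hf (hT.prod hS), hm,
    Measure.map_apply measurable_swap (hT.prod hS), Set.preimage_swap_prod,
    Measure.compProd_apply_prod hS hT]

lemma marg0 (μ : Measure ((Fin 2 × Fin 2) × Fin J × X))
    (hm : μ.map (fun p => (p.2.1, p.2.2)) = (μX.compProd κ0).map Prod.swap)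
    (T : Set (Fin J)) (S : Set X) (hS : MeasurableSet S) :
    μ {p : (Fin 2 × Fin 2) × Fin J × X | p.2.1 ∈ T ∧ p.2.2 ∈ S} = ∫⁻ x in S, κ0 x T ∂μX := by
  have hT : MeasurableSet T := (Set.to_countable T).measurableSet
  have hf : Measurable fun p : (Fin 2 × Fin 2) × Fin J × X => (p.2.1, p.2.2) :=
    measurable_snd.fst.prodMk measurable_snd.snd
  have hset : {p : (Fin 2 × Fin 2) × Fin J × X | p.2.1 ∈ T ∧ p.2.2 ∈ S}
      = (fun p : (Fin 2 × Fin 2) × Fin J × X => (p.2.1, p.2.2)) ⁻¹' (T ×ˢ S) := by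
    ext p; simp [Set.mem_prod]
  rw [hset, ← Measure.map_apply hf (hT.prod hS), hm,
    Measure.map_apply measurable_swap (hT.prod hS), Set.preimage_swap_prod,
    Measure.compProd_apply_prod hS hT]

lemma margX (μ : Measure ((Fin 2 × Fin 2) × Fin J × X))
    (hm : μ.map (fun p => (p.2.1, p.2.2)) = (μX.compProd κ0).map Prod.swap)
    (S : Set X) (hS : MeasurableSet S) :
    μ {p : (Fin 2 × Fin 2) × Fin J × X | p.2.2 ∈ S} = μX S := by
  have h := marg0 μX κ0 μ hm Set.univ S hS
  simp only [Set.mem_univ, true_and] at h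
  rw [h]
  rw [setLIntegral_congr_fun hS (fun x _ => measure_univ), setLIntegral_one]

lemma hEmeas {r : Fin 2 × Fin 2} {c : Fin J} :
    MeasurableSet {p : (Fin 2 × Fin 2) × Fin J × X | p.1 = r ∧ p.2.1 = c} := by
  have : {p : (Fin 2 × Fin 2) × Fin J × X | p.1 = r ∧ p.2.1 = c}
      = (Prod.fst ⁻¹' {r}) ∩ ((fun p : (Fin 2 × Fin 2) × Fin J × X => p.2.1) ⁻¹' {c}) := by
    ext p; simp
  rw [this]
  exact ((measurableSet_singleton r).preimage measurable_fst).inter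
    ((measurableSet_singleton c).preimage measurable_snd.fst)

lemma cell_le (μ : Measure ((Fin 2 × Fin 2) × Fin J × X))
    (hm1 : μ.map (fun p => (p.1, p.2.2)) = (μX.compProd κ1).map Prod.swap)
    (hm0 : μ.map (fun p => (p.2.1, p.2.2)) = (μX.compProd κ0).map Prod.swap)
    (r : Fin 2 × Fin 2) (c : Fin J) :
    μ {p : (Fin 2 × Fin 2) × Fin J × X | p.1 = r ∧ p.2.1 = c}
      ≤ ∫⁻ x, min (κ1 x {r}) (κ0 x {c}) ∂μX := by
  set S := {x : X | κ1 x {r} ≤ κ0 x {c}} with hSdef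
  have hS : MeasurableSet S := measurableSet_le
    (κ1.measurable_coe (measurableSet_singleton r)) (κ0.measurable_coe (measurableSet_singleton c))
  have hA : MeasurableSet {p : (Fin 2 × Fin 2) × Fin J × X | p.2.2 ∈ S} :=
    hS.preimage measurable_snd.snd
  have hsplit := measure_inter_add_diff (μ := μ)
    {p : (Fin 2 × Fin 2) × Fin J × X | p.1 = r ∧ p.2.1 = c} hA
  have h1 : μ ({p : (Fin 2 × Fin 2) × Fin J × X | p.1 = r ∧ p.2.1 = c}
      ∩ {p | p.2.2 ∈ S}) ≤ ∫⁻ x in S, min (κ1 x {r}) (κ0 x {c}) ∂μX := by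
    have hsub : ({p : (Fin 2 × Fin 2) × Fin J × X | p.1 = r ∧ p.2.1 = c} ∩ {p | p.2.2 ∈ S})
        ⊆ {p : (Fin 2 × Fin 2) × Fin J × X | p.1 ∈ ({r} : Set _) ∧ p.2.2 ∈ S} :=
      fun p hp => ⟨hp.1.1, hp.2⟩
    calc μ _ ≤ μ {p : (Fin 2 × Fin 2) × Fin J × X | p.1 ∈ ({r} : Set _) ∧ p.2.2 ∈ S} :=
          measure_mono hsub
    _ = ∫⁻ x in S, κ1 x {r} ∂μX := marg1 μX κ1 μ hm1 {r} S hS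
    _ = ∫⁻ x in S, min (κ1 x {r}) (κ0 x {c}) ∂μX :=
        (setLIntegral_congr_fun hS (fun x hx => (min_eq_left hx).symm))
  have h2 : μ ({p : (Fin 2 × Fin 2) × Fin J × X | p.1 = r ∧ p.2.1 = c}
      \ {p | p.2.2 ∈ S}) ≤ ∫⁻ x in Sᶜ, min (κ1 x {r}) (κ0 x {c}) ∂μX := by
    have hsub : ({p : (Fin 2 × Fin 2) × Fin J × X | p.1 = r ∧ p.2.1 = c} \ {p | p.2.2 ∈ S})
        ⊆ {p : (Fin 2 × Fin 2) × Fin J × X | p.2.1 ∈ ({c} : Set _) ∧ p.2.2 ∈ Sᶜ} :=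
      fun p hp => ⟨hp.1.2, hp.2⟩
    calc μ _ ≤ μ {p : (Fin 2 × Fin 2) × Fin J × X | p.2.1 ∈ ({c} : Set _) ∧ p.2.2 ∈ Sᶜ} :=
          measure_mono hsub
    _ = ∫⁻ x in Sᶜ, κ0 x {c} ∂μX := marg0 μX κ0 μ hm0 {c} Sᶜ hS.compl
    _ = ∫⁻ x in Sᶜ, min (κ1 x {r}) (κ0 x {c}) ∂μX :=
        (setLIntegral_congr_fun hS.compl
          (fun x hx => (min_eq_right (le_of_lt (lt_of_not_ge
            (show ¬ κ1 x {r} ≤ κ0 x {c} from hx)))).symm))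
  calc μ {p : (Fin 2 × Fin 2) × Fin J × X | p.1 = r ∧ p.2.1 = c}
      = μ ({p : (Fin 2 × Fin 2) × Fin J × X | p.1 = r ∧ p.2.1 = c} ∩ {p | p.2.2 ∈ S})
        + μ ({p : (Fin 2 × Fin 2) × Fin J × X | p.1 = r ∧ p.2.1 = c} \ {p | p.2.2 ∈ S}) :=
      hsplit.symm
  _ ≤ ∫⁻ x in S, min (κ1 x {r}) (κ0 x {c}) ∂μX
        + ∫⁻ x in Sᶜ, min (κ1 x {r}) (κ0 x {c}) ∂μX := add_le_add h1 h2
  _ = ∫⁻ x, min (κ1 x {r}) (κ0 x {c}) ∂μX := lintegral_add_compl _ hS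

lemma cell_ge (μ : Measure ((Fin 2 × Fin 2) × Fin J × X)) [IsProbabilityMeasure μ]
    (hm1 : μ.map (fun p => (p.1, p.2.2)) = (μX.compProd κ1).map Prod.swap)
    (hm0 : μ.map (fun p => (p.2.1, p.2.2)) = (μX.compProd κ0).map Prod.swap)
    (r : Fin 2 × Fin 2) (c : Fin J) :
    ∫⁻ x, (κ1 x {r} + κ0 x {c} - 1) ∂μX
      ≤ μ {p : (Fin 2 × Fin 2) × Fin J × X | p.1 = r ∧ p.2.1 = c} := by
  have hfm : Measurable fun x => κ1 x {r} + κ0 x {c} :=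
    (κ1.measurable_coe (measurableSet_singleton r)).add
      (κ0.measurable_coe (measurableSet_singleton c))
  set S := {x : X | 1 ≤ κ1 x {r} + κ0 x {c}} with hSdef
  have hS : MeasurableSet S := measurableSet_le measurable_const hfm
  have step0 : ∫⁻ x, (κ1 x {r} + κ0 x {c} - 1) ∂μX
      = ∫⁻ x in S, (κ1 x {r} + κ0 x {c} - 1) ∂μX := by
    rw [← lintegral_add_compl (fun x => κ1 x {r} + κ0 x {c} - 1) hS]
    have hz : ∫⁻ x in Sᶜ, (κ1 x {r} + κ0 x {c} - 1) ∂μX = 0 := by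
      rw [setLIntegral_congr_fun hS.compl
        (fun x hx => tsub_eq_zero_of_le (le_of_lt (lt_of_not_ge
          (show ¬ (1:ℝ≥0∞) ≤ κ1 x {r} + κ0 x {c} from hx))))]
      simp
    rw [hz, add_zero]
  have step1 : ∫⁻ x in S, (κ1 x {r} + κ0 x {c} - 1) ∂μX
      = (∫⁻ x in S, (κ1 x {r} + κ0 x {c}) ∂μX) - μX S := by
    rw [← setLIntegral_one S]
    exact lintegral_sub measurable_const
      (by rw [setLIntegral_one]; exact measure_ne_top _ _)
      ((ae_restrict_iff' hS).2 (ae_of_all _ fun x hx => hx))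
  have step2 : ∫⁻ x in S, (κ1 x {r} + κ0 x {c}) ∂μX
      = μ {p : (Fin 2 × Fin 2) × Fin J × X | p.1 ∈ ({r} : Set _) ∧ p.2.2 ∈ S}
        + μ {p : (Fin 2 × Fin 2) × Fin J × X | p.2.1 ∈ ({c} : Set _) ∧ p.2.2 ∈ S} := by
    rw [lintegral_add_left ((κ1.measurable_coe (measurableSet_singleton r)))]
    rw [marg1 μX κ1 μ hm1 {r} S hS, marg0 μX κ0 μ hm0 {c} S hS]
  have hBm : MeasurableSet {p : (Fin 2 × Fin 2) × Fin J × X | p.2.1 ∈ ({c} : Set _) ∧ p.2.2 ∈ S} := by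
    have : {p : (Fin 2 × Fin 2) × Fin J × X | p.2.1 ∈ ({c} : Set _) ∧ p.2.2 ∈ S}
        = (fun p : (Fin 2 × Fin 2) × Fin J × X => (p.2.1, p.2.2)) ⁻¹' (({c} : Set _) ×ˢ S) :=
      rfl
    rw [this]
    exact ((measurableSet_singleton c).prod hS).preimage
      (measurable_snd.fst.prodMk measurable_snd.snd)
  have step3 : μ {p : (Fin 2 × Fin 2) × Fin J × X | p.1 ∈ ({r} : Set _) ∧ p.2.2 ∈ S}
      + μ {p : (Fin 2 × Fin 2) × Fin J × X | p.2.1 ∈ ({c} : Set _) ∧ p.2.2 ∈ S}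
      ≤ μ {p : (Fin 2 × Fin 2) × Fin J × X | p.1 = r ∧ p.2.1 = c} + μX S := by
    rw [← measure_union_add_inter _ hBm]
    have hu : μ ({p : (Fin 2 × Fin 2) × Fin J × X | p.1 ∈ ({r} : Set _) ∧ p.2.2 ∈ S}
        ∪ {p | p.2.1 ∈ ({c} : Set _) ∧ p.2.2 ∈ S}) ≤ μX S := by
      rw [← margX μX κ0 μ hm0 S hS]
      refine measure_mono fun p hp => ?_
      rcases hp with hp | hp
      · exact hp.2
      · exact hp.2
    have hi : μ ({p : (Fin 2 × Fin 2) × Fin J × X | p.1 ∈ ({r} : Set _) ∧ p.2.2 ∈ S}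
        ∩ {p | p.2.1 ∈ ({c} : Set _) ∧ p.2.2 ∈ S})
        ≤ μ {p : (Fin 2 × Fin 2) × Fin J × X | p.1 = r ∧ p.2.1 = c} := by
      refine measure_mono fun p hp => ?_
      exact ⟨hp.1.1, hp.2.1⟩
    calc _ ≤ μX S + μ {p : (Fin 2 × Fin 2) × Fin J × X | p.1 = r ∧ p.2.1 = c} :=
        add_le_add hu hi
    _ = _ := add_comm _ _
  rw [step0, step1]
  rw [tsub_le_iff_right]
  calc ∫⁻ x in S, (κ1 x {r} + κ0 x {c}) ∂μX
      = _ + _ := step2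
  _ ≤ _ := step3

end bounds
/-! ### The extreme coupling -/

section extreme

variable {J : ℕ} {X : Type*} [MeasurableSpace X]
  (μX : Measure X) [IsProbabilityMeasure μX]
  (κ1 : Kernel X (Fin 2 × Fin 2)) [IsMarkovKernel κ1]
  (κ0 : Kernel X (Fin J)) [IsMarkovKernel κ0]

lemma exists_extreme (j j' : Fin J) (hjj' : j ≠ j') :
    ∃ μ : Measure ((Fin 2 × Fin 2) × Fin J × X), IsProbabilityMeasure μ ∧
      μ.map (fun p => (p.1, p.2.2)) = (μX.compProd κ1).map Prod.swap ∧
      μ.map (fun p => (p.2.1, p.2.2)) = (μX.compProd κ0).map Prod.swap ∧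
      μ {p : (Fin 2 × Fin 2) × Fin J × X | p.1 = (1,1) ∧ p.2.1 = j}
        = ∫⁻ x, min (κ1 x {(1,1)}) (κ0 x {j}) ∂μX ∧
      μ {p : (Fin 2 × Fin 2) × Fin J × X | p.1 = (0,1) ∧ p.2.1 = j}
        = ∫⁻ x, (κ1 x {(0,1)} + κ0 x {j} - 1) ∂μX ∧
      μ {p : (Fin 2 × Fin 2) × Fin J × X | p.1 = (1,1) ∧ p.2.1 = j'}
        = ∫⁻ x, (κ1 x {(1,1)} + κ0 x {j'} - 1) ∂μX ∧
      μ {p : (Fin 2 × Fin 2) × Fin J × X | p.1 = (0,1) ∧ p.2.1 = j'}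
        = ∫⁻ x, min (κ1 x {(0,1)}) (κ0 x {j'}) ∂μX := by
  set μ : Measure ((Fin 2 × Fin 2) × Fin J × X) :=
    ∑ rc : (Fin 2 × Fin 2) × Fin J,
      ((μX.withDensity fun x => ENNReal.ofReal (mf κ1 κ0 j j' rc.1 rc.2 x)).map
        fun x => (rc.1, rc.2, x)) with hμdef
  have hmapm : ∀ rc : (Fin 2 × Fin 2) × Fin J,
      Measurable fun x : X => ((rc.1, rc.2, x) : (Fin 2 × Fin 2) × Fin J × X) :=
    fun rc => measurable_const.prodMk (measurable_const.prodMk measurable_id)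
  have hdm : ∀ (r : Fin 2 × Fin 2) (c : Fin J),
      Measurable fun x => ENNReal.ofReal (mf κ1 κ0 j j' r c x) :=
    fun r c => (mf_meas κ1 κ0 j j' r c).ennreal_ofReal
  have happly : ∀ E : Set ((Fin 2 × Fin 2) × Fin J × X), MeasurableSet E →
      μ E = ∑ rc : (Fin 2 × Fin 2) × Fin J,
        ∫⁻ x in (fun x : X => ((rc.1, rc.2, x) : (Fin 2 × Fin 2) × Fin J × X)) ⁻¹' E,
          ENNReal.ofReal (mf κ1 κ0 j j' rc.1 rc.2 x) ∂μX := by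
    intro E hE
    rw [hμdef, Measure.finset_sum_apply]
    exact Finset.sum_congr rfl fun rc _ => by
      rw [Measure.map_apply (hmapm rc) hE, withDensity_apply _ ((hmapm rc) hE)]
  have hcell : ∀ (r : Fin 2 × Fin 2) (c : Fin J),
      μ {p : (Fin 2 × Fin 2) × Fin J × X | p.1 = r ∧ p.2.1 = c}
        = ∫⁻ x, ENNReal.ofReal (mf κ1 κ0 j j' r c x) ∂μX := by
    intro r c
    rw [happly _ hEmeas]
    rw [Finset.sum_eq_single (r, c)]
    · have hpre : (fun x : X => ((((r,c).1 : Fin 2 × Fin 2), (r,c).2, x) :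
          (Fin 2 × Fin 2) × Fin J × X)) ⁻¹' {p | p.1 = r ∧ p.2.1 = c} = Set.univ := by
        ext x; simp
      rw [hpre, Measure.restrict_univ]
    · intro rc _ hne
      have hpre : (fun x : X => ((rc.1, rc.2, x) : (Fin 2 × Fin 2) × Fin J × X)) ⁻¹'
          {p : (Fin 2 × Fin 2) × Fin J × X | p.1 = r ∧ p.2.1 = c} = ∅ := by
        ext x
        simp only [Set.mem_preimage, Set.mem_setOf_eq, Set.mem_empty_iff_false, iff_false]
        rintro ⟨h1, h2⟩
        exact hne (Prod.ext h1 h2)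
      rw [hpre]
      simp
    · intro h
      exact absurd (Finset.mem_univ _) h
  have hμ1 : μ.map (fun p => (p.1, p.2.2)) = (μX.compProd κ1).map Prod.swap := by
    apply measure_ext_prod
    intro r S hS
    have hf : Measurable fun p : (Fin 2 × Fin 2) × Fin J × X => (p.1, p.2.2) :=
      measurable_fst.prodMk measurable_snd.snd
    rw [Measure.map_apply hf ((measurableSet_singleton r).prod hS),
      Measure.map_apply measurable_swap ((measurableSet_singleton r).prod hS),
      Set.preimage_swap_prod, Measure.compProd_apply_prod hS (measurableSet_singleton r)]
    have hpre : (fun p : (Fin 2 × Fin 2) × Fin J × X => (p.1, p.2.2)) ⁻¹' ({r} ×ˢ S)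
        = {p : (Fin 2 × Fin 2) × Fin J × X | p.1 = r ∧ p.2.2 ∈ S} := rfl
    have hEm : MeasurableSet {p : (Fin 2 × Fin 2) × Fin J × X | p.1 = r ∧ p.2.2 ∈ S} := by
      have : {p : (Fin 2 × Fin 2) × Fin J × X | p.1 = r ∧ p.2.2 ∈ S}
          = (fun p : (Fin 2 × Fin 2) × Fin J × X => (p.1, p.2.2)) ⁻¹' (({r} : Set _) ×ˢ S) :=
        rfl
      rw [this]
      exact ((measurableSet_singleton r).prod hS).preimage hf
    rw [hpre, happly _ hEm, Fintype.sum_prod_type]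
    rw [Finset.sum_eq_single r]
    · have hpre2 : ∀ c : Fin J, (fun x : X => ((r, c, x) : (Fin 2 × Fin 2) × Fin J × X)) ⁻¹'
          {p : (Fin 2 × Fin 2) × Fin J × X | p.1 = r ∧ p.2.2 ∈ S} = S := by
        intro c; ext x; simp
      have : ∀ c : Fin J, ∫⁻ x in (fun x : X => ((r, c, x) : (Fin 2 × Fin 2) × Fin J × X)) ⁻¹'
          {p : (Fin 2 × Fin 2) × Fin J × X | p.1 = r ∧ p.2.2 ∈ S},
            ENNReal.ofReal (mf κ1 κ0 j j' r c x) ∂μX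
          = ∫⁻ x in S, ENNReal.ofReal (mf κ1 κ0 j j' r c x) ∂μX := fun c => by rw [hpre2 c]
      rw [Finset.sum_congr rfl fun c _ => this c]
      rw [← lintegral_finset_sum _ fun c _ => hdm r c]
      refine setLIntegral_congr_fun hS (fun x _ => ?_)
      rw [← ENNReal.ofReal_sum_of_nonneg fun c _ => mf_nonneg κ1 κ0 j j' hjj' r c x,
        mf_rowsum κ1 κ0 j j' hjj' r x]
      exact ENNReal.ofReal_toReal (measure_ne_top _ _)
    · intro r₀ _ hne
      refine Finset.sum_eq_zero fun c _ => ?_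
      have hpre0 : (fun x : X => ((r₀, c, x) : (Fin 2 × Fin 2) × Fin J × X)) ⁻¹'
          {p : (Fin 2 × Fin 2) × Fin J × X | p.1 = r ∧ p.2.2 ∈ S} = ∅ := by
        ext x
        simp only [Set.mem_preimage, Set.mem_setOf_eq, Set.mem_empty_iff_false, iff_false]
        rintro ⟨h1, _⟩
        exact hne h1
      rw [hpre0]
      simp
    · intro h
      exact absurd (Finset.mem_univ _) h
  have hμ0 : μ.map (fun p => (p.2.1, p.2.2)) = (μX.compProd κ0).map Prod.swap := by
    apply measure_ext_prod
    intro c S hS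
    have hf : Measurable fun p : (Fin 2 × Fin 2) × Fin J × X => (p.2.1, p.2.2) :=
      measurable_snd.fst.prodMk measurable_snd.snd
    rw [Measure.map_apply hf ((measurableSet_singleton c).prod hS),
      Measure.map_apply measurable_swap ((measurableSet_singleton c).prod hS),
      Set.preimage_swap_prod, Measure.compProd_apply_prod hS (measurableSet_singleton c)]
    have hpre : (fun p : (Fin 2 × Fin 2) × Fin J × X => (p.2.1, p.2.2)) ⁻¹' ({c} ×ˢ S)
        = {p : (Fin 2 × Fin 2) × Fin J × X | p.2.1 = c ∧ p.2.2 ∈ S} := rfl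
    have hEm : MeasurableSet {p : (Fin 2 × Fin 2) × Fin J × X | p.2.1 = c ∧ p.2.2 ∈ S} := by
      have : {p : (Fin 2 × Fin 2) × Fin J × X | p.2.1 = c ∧ p.2.2 ∈ S}
          = (fun p : (Fin 2 × Fin 2) × Fin J × X => (p.2.1, p.2.2)) ⁻¹' (({c} : Set _) ×ˢ S) :=
        rfl
      rw [this]
      exact ((measurableSet_singleton c).prod hS).preimage hf
    rw [hpre, happly _ hEm, Fintype.sum_prod_type]
    have hinner : ∀ r : Fin 2 × Fin 2,
        ∑ c₀ : Fin J, ∫⁻ x in (fun x : X => ((r, c₀, x) : (Fin 2 × Fin 2) × Fin J × X)) ⁻¹'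
          {p : (Fin 2 × Fin 2) × Fin J × X | p.2.1 = c ∧ p.2.2 ∈ S},
            ENNReal.ofReal (mf κ1 κ0 j j' r c₀ x) ∂μX
        = ∫⁻ x in S, ENNReal.ofReal (mf κ1 κ0 j j' r c x) ∂μX := by
      intro r
      rw [Finset.sum_eq_single c]
      · have : (fun x : X => ((r, c, x) : (Fin 2 × Fin 2) × Fin J × X)) ⁻¹'
            {p : (Fin 2 × Fin 2) × Fin J × X | p.2.1 = c ∧ p.2.2 ∈ S} = S := by
          ext x; simp
        rw [this]
      · intro c₀ _ hne
        have : (fun x : X => ((r, c₀, x) : (Fin 2 × Fin 2) × Fin J × X)) ⁻¹'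
            {p : (Fin 2 × Fin 2) × Fin J × X | p.2.1 = c ∧ p.2.2 ∈ S} = ∅ := by
          ext x
          simp only [Set.mem_preimage, Set.mem_setOf_eq, Set.mem_empty_iff_false, iff_false]
          rintro ⟨h1, _⟩
          exact hne h1
        rw [this]
        simp
      · intro h
        exact absurd (Finset.mem_univ _) h
    rw [Finset.sum_congr rfl fun r _ => hinner r]
    rw [← lintegral_finset_sum _ fun r _ => hdm r c]
    refine setLIntegral_congr_fun hS (fun x _ => ?_)
    rw [← ENNReal.ofReal_sum_of_nonneg fun r _ => mf_nonneg κ1 κ0 j j' hjj' r c x,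
      mf_colsum κ1 κ0 j j' hjj' c x]
    exact ENNReal.ofReal_toReal (measure_ne_top _ _)
  have hprob : IsProbabilityMeasure μ := by
    constructor
    have hf : Measurable fun p : (Fin 2 × Fin 2) × Fin J × X => (p.1, p.2.2) :=
      measurable_fst.prodMk measurable_snd.snd
    have huniv : μ Set.univ = (μ.map (fun p : (Fin 2 × Fin 2) × Fin J × X => (p.1, p.2.2)))
        Set.univ := by
      rw [Measure.map_apply hf MeasurableSet.univ, Set.preimage_univ]
    haveI : IsProbabilityMeasure ((μX.compProd κ1).map Prod.swap) :=
      Measure.isProbabilityMeasure_map measurable_swap.aemeasurable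
    rw [huniv, hμ1]
    exact measure_univ
  refine ⟨μ, hprob, hμ1, hμ0, ?_, ?_, ?_, ?_⟩
  · rw [hcell (1,1) j]
    refine lintegral_congr fun x => ?_
    rw [mf_cell_11j κ1 κ0 j j' hjj' x]
    simp only [pker, qker]
    exact ofReal_cell_min (measure_ne_top _ _) (measure_ne_top _ _)
  · rw [hcell (0,1) j]
    refine lintegral_congr fun x => ?_
    rw [mf_cell_01j κ1 κ0 j j' hjj' x]
    simp only [pker, qker]
    exact ofReal_cell_sub (measure_ne_top _ _) (measure_ne_top _ _)
  · rw [hcell (1,1) j']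
    refine lintegral_congr fun x => ?_
    rw [mf_cell_11j' κ1 κ0 j j' hjj' x]
    simp only [pker, qker]
    exact ofReal_cell_sub (measure_ne_top _ _) (measure_ne_top _ _)
  · rw [hcell (0,1) j']
    refine lintegral_congr fun x => ?_
    rw [mf_cell_01j' κ1 κ0 j j' hjj' x]
    simp only [pker, qker]
    exact ofReal_cell_min (measure_ne_top _ _) (measure_ne_top _ _)

end extreme
/-! ### Real-integral conversions and monotonicity of the fraction -/

section conversions

variable {J : ℕ} {X : Type*} [MeasurableSpace X]
  (μX : Measure X) [IsProbabilityMeasure μX]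
  (κ1 : Kernel X (Fin 2 × Fin 2)) [IsMarkovKernel κ1]
  (κ0 : Kernel X (Fin J)) [IsMarkovKernel κ0]

lemma integral_min_eq (r : Fin 2 × Fin 2) (c : Fin J) :
    ∫ x, min (κ1 x {r}).toReal (κ0 x {c}).toReal ∂μX
      = (∫⁻ x, min (κ1 x {r}) (κ0 x {c}) ∂μX).toReal := by
  have h : ∀ x : X, min (κ1 x {r}).toReal (κ0 x {c}).toReal
      = (min (κ1 x {r}) (κ0 x {c})).toReal :=
    fun x => (ENNReal.toReal_min (measure_ne_top _ _) (measure_ne_top _ _)).symm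
  simp_rw [h]
  exact integral_toReal (((κ1.measurable_coe (measurableSet_singleton r)).min
    (κ0.measurable_coe (measurableSet_singleton c))).aemeasurable)
    (ae_of_all _ fun x => lt_of_le_of_lt (min_le_left _ _) (measure_lt_top _ _))

lemma integral_max_eq (r : Fin 2 × Fin 2) (c : Fin J) :
    ∫ x, max ((κ1 x {r}).toReal + (κ0 x {c}).toReal - 1) 0 ∂μX
      = (∫⁻ x, (κ1 x {r} + κ0 x {c} - 1) ∂μX).toReal := by
  have h : ∀ x : X, max ((κ1 x {r}).toReal + (κ0 x {c}).toReal - 1) 0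
      = ((κ1 x {r} + κ0 x {c}) - 1).toReal :=
    fun x => (toReal_cell_sub (measure_ne_top _ _) (measure_ne_top _ _)).symm
  simp_rw [h]
  exact integral_toReal ((((κ1.measurable_coe (measurableSet_singleton r)).add
    (κ0.measurable_coe (measurableSet_singleton c))).sub measurable_const).aemeasurable)
    (ae_of_all _ fun x => lt_of_le_of_lt tsub_le_self
      (ENNReal.add_lt_top.2 ⟨measure_lt_top _ _, measure_lt_top _ _⟩))

lemma hminfin (r : Fin 2 × Fin 2) (c : Fin J) :
    (∫⁻ x, min (κ1 x {r}) (κ0 x {c}) ∂μX) ≠ ⊤ := by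
  refine ((lintegral_mono fun x => (min_le_left _ _).trans prob_le_one).trans_lt ?_).ne
  rw [lintegral_one, measure_univ]
  exact ENNReal.one_lt_top

lemma hsubfin (r : Fin 2 × Fin 2) (c : Fin J) :
    (∫⁻ x, (κ1 x {r} + κ0 x {c} - 1) ∂μX) ≠ ⊤ := by
  refine ((lintegral_mono fun x =>
    (cell_sub_le_min prob_le_one prob_le_one).trans ((min_le_left _ _).trans
      prob_le_one)).trans_lt ?_).ne
  rw [lintegral_one, measure_univ]
  exact ENNReal.one_lt_top

lemma lint_sub_le_min (r : Fin 2 × Fin 2) (c : Fin J) :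
    (∫⁻ x, (κ1 x {r} + κ0 x {c} - 1) ∂μX) ≤ ∫⁻ x, min (κ1 x {r}) (κ0 x {c}) ∂μX :=
  lintegral_mono fun x => cell_sub_le_min prob_le_one prob_le_one

lemma denom_split (μ : Measure ((Fin 2 × Fin 2) × Fin J × X)) [IsFiniteMeasure μ] (ℓ : Fin J) :
    (μ {p : (Fin 2 × Fin 2) × Fin J × X | p.1.2 = 1 ∧ p.2.1 = ℓ}).toReal
      = (μ {p : (Fin 2 × Fin 2) × Fin J × X | p.1 = ((0:Fin 2),(1:Fin 2)) ∧ p.2.1 = ℓ}).toReal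
        + (μ {p : (Fin 2 × Fin 2) × Fin J × X | p.1 = ((1:Fin 2),(1:Fin 2)) ∧ p.2.1 = ℓ}).toReal := by
  have hr : ∀ r : Fin 2 × Fin 2, r.2 = 1 ↔ (r = (0,1) ∨ r = (1,1)) := by decide
  have hset : {p : (Fin 2 × Fin 2) × Fin J × X | p.1.2 = 1 ∧ p.2.1 = ℓ}
      = {p : (Fin 2 × Fin 2) × Fin J × X | p.1 = ((0:Fin 2),(1:Fin 2)) ∧ p.2.1 = ℓ}
        ∪ {p : (Fin 2 × Fin 2) × Fin J × X | p.1 = ((1:Fin 2),(1:Fin 2)) ∧ p.2.1 = ℓ} := by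
    ext p
    simp only [Set.mem_setOf_eq, Set.mem_union, hr p.1]
    tauto
  have hdisj : Disjoint {p : (Fin 2 × Fin 2) × Fin J × X | p.1 = ((0:Fin 2),(1:Fin 2)) ∧ p.2.1 = ℓ}
      {p : (Fin 2 × Fin 2) × Fin J × X | p.1 = ((1:Fin 2),(1:Fin 2)) ∧ p.2.1 = ℓ} := by
    rw [Set.disjoint_left]
    rintro p ⟨h1, _⟩ ⟨h2, _⟩
    exact absurd (h1 ▸ h2) (by decide)
  rw [hset, measure_union hdisj hEmeas]
  exact ENNReal.toReal_add (measure_ne_top μ _) (measure_ne_top μ _)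

end conversions

lemma frac_mono {a b a' b' : ℝ} (ha : 0 ≤ a) (hb' : 0 ≤ b')
    (hab : 0 < b + a) (hab' : 0 < b' + a') (h1 : a ≤ a') (h2 : b' ≤ b) :
    a / (b + a) ≤ a' / (b' + a') := by
  rw [div_le_div_iff₀ hab hab']
  nlinarith
/-- Corollary 2: for any number `J ≥ 2` of protected classes, the identified set of the
true-positive-rate disparity `δ_TPRD(j, j†)` between two distinct classes equals the closed
interval `[δ^L, δ^U]` formed from the Fréchet–Hoeffding bounds. -/
theorem tprd_interval
    {J : ℕ} (hJ : 2 ≤ J) {X : Type*} [MeasurableSpace X] [StandardBorelSpace X]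
    (μX : Measure X) [IsProbabilityMeasure μX]
    (κ1 : Kernel X (Fin 2 × Fin 2)) [IsMarkovKernel κ1]
    (κ0 : Kernel X (Fin J)) [IsMarkovKernel κ0]
    (μ1X : Measure ((Fin 2 × Fin 2) × X)) (μ0X : Measure (Fin J × X))
    (hκ1 : (μX.compProd κ1).map Prod.swap = μ1X)
    (hκ0 : (μX.compProd κ0).map Prod.swap = μ0X)
    (j j' : Fin J) (hjj' : j ≠ j')
    (P11 P01 : X → ℝ) (Pc : Fin J → X → ℝ)
    (hP11 : P11 = fun x => (κ1 x {((1:Fin 2), (1:Fin 2))}).toReal)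
    (hP01 : P01 = fun x => (κ1 x {((0:Fin 2), (1:Fin 2))}).toReal)
    (hPc : Pc = fun ℓ x => (κ0 x {ℓ}).toReal)
    (θU1 θL1 θU0 θL0 : Fin J → ℝ)
    (hθU1 : θU1 = fun ℓ => ∫ x, min (P11 x) (Pc ℓ x) ∂μX)
    (hθL1 : θL1 = fun ℓ => ∫ x, max (P11 x + Pc ℓ x - 1) 0 ∂μX)
    (hθU0 : θU0 = fun ℓ => ∫ x, min (P01 x) (Pc ℓ x) ∂μX)
    (hθL0 : θL0 = fun ℓ => ∫ x, max (P01 x + Pc ℓ x - 1) 0 ∂μX)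
    (hpos_j : 0 < θL1 j + θL0 j) (hpos_j' : 0 < θL1 j' + θL0 j') :
    {d : ℝ | ∃ μ ∈ MSet μ1X μ0X,
        d = (μ {p : (Fin 2 × Fin 2) × Fin J × X | p.1 = (1, 1) ∧ p.2.1 = j}).toReal /
              (μ {p : (Fin 2 × Fin 2) × Fin J × X | p.1.2 = 1 ∧ p.2.1 = j}).toReal -
            (μ {p : (Fin 2 × Fin 2) × Fin J × X | p.1 = (1, 1) ∧ p.2.1 = j'}).toReal /
              (μ {p : (Fin 2 × Fin 2) × Fin J × X | p.1.2 = 1 ∧ p.2.1 = j'}).toReal} =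
      Set.Icc
        (θL1 j / (θL1 j + θU0 j) - θU1 j' / (θU1 j' + θL0 j'))
        (θU1 j / (θU1 j + θL0 j) - θL1 j' / (θL1 j' + θU0 j')) := by
  -- conversions of the θ's to `toReal` of lower integrals
  have eU1 : ∀ ℓ, θU1 ℓ
      = (∫⁻ x, min (κ1 x {((1:Fin 2),(1:Fin 2))}) (κ0 x {ℓ}) ∂μX).toReal := by
    intro ℓ; rw [hθU1]; simp only [hP11, hPc]; exact integral_min_eq μX κ1 κ0 _ _
  have eL1 : ∀ ℓ, θL1 ℓ
      = (∫⁻ x, (κ1 x {((1:Fin 2),(1:Fin 2))} + κ0 x {ℓ} - 1) ∂μX).toReal := by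
    intro ℓ; rw [hθL1]; simp only [hP11, hPc]; exact integral_max_eq μX κ1 κ0 _ _
  have eU0 : ∀ ℓ, θU0 ℓ
      = (∫⁻ x, min (κ1 x {((0:Fin 2),(1:Fin 2))}) (κ0 x {ℓ}) ∂μX).toReal := by
    intro ℓ; rw [hθU0]; simp only [hP01, hPc]; exact integral_min_eq μX κ1 κ0 _ _
  have eL0 : ∀ ℓ, θL0 ℓ
      = (∫⁻ x, (κ1 x {((0:Fin 2),(1:Fin 2))} + κ0 x {ℓ} - 1) ∂μX).toReal := by
    intro ℓ; rw [hθL0]; simp only [hP01, hPc]; exact integral_max_eq μX κ1 κ0 _ _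
  have hLU1 : ∀ ℓ, θL1 ℓ ≤ θU1 ℓ := fun ℓ => by
    rw [eL1 ℓ, eU1 ℓ]
    exact ENNReal.toReal_mono (hminfin μX κ1 κ0 _ _) (lint_sub_le_min μX κ1 κ0 _ _)
  have hLU0 : ∀ ℓ, θL0 ℓ ≤ θU0 ℓ := fun ℓ => by
    rw [eL0 ℓ, eU0 ℓ]
    exact ENNReal.toReal_mono (hminfin μX κ1 κ0 _ _) (lint_sub_le_min μX κ1 κ0 _ _)
  have hL1n : ∀ ℓ, 0 ≤ θL1 ℓ := fun ℓ => (eL1 ℓ) ▸ ENNReal.toReal_nonneg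
  have hL0n : ∀ ℓ, 0 ≤ θL0 ℓ := fun ℓ => (eL0 ℓ) ▸ ENNReal.toReal_nonneg
  ext d
  simp only [Set.mem_setOf_eq, Set.mem_Icc]
  constructor
  · -- every attainable disparity lies in the interval
    rintro ⟨μ, ⟨hμP, hμ1, hμ0⟩, rfl⟩
    haveI := hμP
    have hm1 : μ.map (fun p => (p.1, p.2.2)) = (μX.compProd κ1).map Prod.swap := by
      rw [hμ1, hκ1]
    have hm0 : μ.map (fun p => (p.2.1, p.2.2)) = (μX.compProd κ0).map Prod.swap := by
      rw [hμ0, hκ0]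
    have hub : ∀ (r : Fin 2 × Fin 2) (ℓ : Fin J),
        (μ {p : (Fin 2 × Fin 2) × Fin J × X | p.1 = r ∧ p.2.1 = ℓ}).toReal
          ≤ (∫⁻ x, min (κ1 x {r}) (κ0 x {ℓ}) ∂μX).toReal :=
      fun r ℓ => ENNReal.toReal_mono (hminfin μX κ1 κ0 _ _) (cell_le μX κ1 κ0 μ hm1 hm0 r ℓ)
    have hlb : ∀ (r : Fin 2 × Fin 2) (ℓ : Fin J),
        (∫⁻ x, (κ1 x {r} + κ0 x {ℓ} - 1) ∂μX).toReal
          ≤ (μ {p : (Fin 2 × Fin 2) × Fin J × X | p.1 = r ∧ p.2.1 = ℓ}).toReal :=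
      fun r ℓ => ENNReal.toReal_mono (measure_ne_top μ _) (cell_ge μX κ1 κ0 μ hm1 hm0 r ℓ)
    rw [denom_split μ j, denom_split μ j']
    have ha1U : (μ {p : (Fin 2 × Fin 2) × Fin J × X | p.1 = (1,1) ∧ p.2.1 = j}).toReal
        ≤ θU1 j := by rw [eU1 j]; exact hub (1,1) j
    have ha1L : θL1 j
        ≤ (μ {p : (Fin 2 × Fin 2) × Fin J × X | p.1 = (1,1) ∧ p.2.1 = j}).toReal := by
      rw [eL1 j]; exact hlb (1,1) j
    have ha0U : (μ {p : (Fin 2 × Fin 2) × Fin J × X | p.1 = (0,1) ∧ p.2.1 = j}).toReal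
        ≤ θU0 j := by rw [eU0 j]; exact hub (0,1) j
    have ha0L : θL0 j
        ≤ (μ {p : (Fin 2 × Fin 2) × Fin J × X | p.1 = (0,1) ∧ p.2.1 = j}).toReal := by
      rw [eL0 j]; exact hlb (0,1) j
    have hb1U : (μ {p : (Fin 2 × Fin 2) × Fin J × X | p.1 = (1,1) ∧ p.2.1 = j'}).toReal
        ≤ θU1 j' := by rw [eU1 j']; exact hub (1,1) j'
    have hb1L : θL1 j'
        ≤ (μ {p : (Fin 2 × Fin 2) × Fin J × X | p.1 = (1,1) ∧ p.2.1 = j'}).toReal := by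
      rw [eL1 j']; exact hlb (1,1) j'
    have hb0U : (μ {p : (Fin 2 × Fin 2) × Fin J × X | p.1 = (0,1) ∧ p.2.1 = j'}).toReal
        ≤ θU0 j' := by rw [eU0 j']; exact hub (0,1) j'
    have hb0L : θL0 j'
        ≤ (μ {p : (Fin 2 × Fin 2) × Fin J × X | p.1 = (0,1) ∧ p.2.1 = j'}).toReal := by
      rw [eL0 j']; exact hlb (0,1) j'
    have han : 0 ≤ (μ {p : (Fin 2 × Fin 2) × Fin J × X | p.1 = (1,1) ∧ p.2.1 = j}).toReal :=
      ENNReal.toReal_nonneg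
    have hbn : 0 ≤ (μ {p : (Fin 2 × Fin 2) × Fin J × X | p.1 = (1,1) ∧ p.2.1 = j'}).toReal :=
      ENNReal.toReal_nonneg
    have hapos : 0 < (μ {p : (Fin 2 × Fin 2) × Fin J × X | p.1 = (0,1) ∧ p.2.1 = j}).toReal
        + (μ {p : (Fin 2 × Fin 2) × Fin J × X | p.1 = (1,1) ∧ p.2.1 = j}).toReal := by
      have := add_le_add ha0L ha1L; linarith
    have hbpos : 0 < (μ {p : (Fin 2 × Fin 2) × Fin J × X | p.1 = (0,1) ∧ p.2.1 = j'}).toReal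
        + (μ {p : (Fin 2 × Fin 2) × Fin J × X | p.1 = (1,1) ∧ p.2.1 = j'}).toReal := by
      have := add_le_add hb0L hb1L; linarith
    set a1 := (μ {p : (Fin 2 × Fin 2) × Fin J × X | p.1 = (1,1) ∧ p.2.1 = j}).toReal with ha1d
    set a0 := (μ {p : (Fin 2 × Fin 2) × Fin J × X | p.1 = (0,1) ∧ p.2.1 = j}).toReal with ha0d
    set b1 := (μ {p : (Fin 2 × Fin 2) × Fin J × X | p.1 = (1,1) ∧ p.2.1 = j'}).toReal with hb1d
    set b0 := (μ {p : (Fin 2 × Fin 2) × Fin J × X | p.1 = (0,1) ∧ p.2.1 = j'}).toReal with hb0d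
    constructor
    · have h1 : θL1 j / (θU0 j + θL1 j) ≤ a1 / (a0 + a1) :=
        frac_mono (hL1n j) (le_trans (hL0n j) ha0L) (by linarith [hLU0 j]) hapos ha1L ha0U
      have h2 : b1 / (b0 + b1) ≤ θU1 j' / (θL0 j' + θU1 j') :=
        frac_mono (le_trans (hL1n j') hb1L) (hL0n j') hbpos
          (by linarith [hLU1 j']) hb1U hb0L
      rw [add_comm (θU0 j) (θL1 j)] at h1
      rw [add_comm (θL0 j') (θU1 j')] at h2
      linarith [h1, h2]
    · have h1 : a1 / (a0 + a1) ≤ θU1 j / (θL0 j + θU1 j) :=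
        frac_mono (le_trans (hL1n j) ha1L) (hL0n j) hapos
          (by linarith [hLU1 j]) ha1U ha0L
      have h2 : θL1 j' / (θU0 j' + θL1 j') ≤ b1 / (b0 + b1) :=
        frac_mono (hL1n j') (le_trans (hL0n j') hb0L) (by linarith [hLU0 j']) hbpos hb1L hb0U
      rw [add_comm (θL0 j) (θU1 j)] at h1
      rw [add_comm (θU0 j') (θL1 j')] at h2
      linarith [h1, h2]
  · -- every point of the interval is attained
    rintro ⟨hdL, hdU⟩
    obtain ⟨μP, hPprob, hP1, hP0, hc1, hc2, hc3, hc4⟩ := exists_extreme μX κ1 κ0 j j' hjj'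
    obtain ⟨μM, hMprob, hM1, hM0, hd1, hd2, hd3, hd4⟩ := exists_extreme μX κ1 κ0 j' j hjj'.symm
    haveI := hPprob
    haveI := hMprob
    -- cell values in real form
    have hα1 : (μP {p : (Fin 2 × Fin 2) × Fin J × X | p.1 = (1,1) ∧ p.2.1 = j}).toReal
        = θU1 j := by rw [hc1, ← eU1 j]
    have hα0 : (μP {p : (Fin 2 × Fin 2) × Fin J × X | p.1 = (0,1) ∧ p.2.1 = j}).toReal
        = θL0 j := by rw [hc2, ← eL0 j]
    have hα1' : (μP {p : (Fin 2 × Fin 2) × Fin J × X | p.1 = (1,1) ∧ p.2.1 = j'}).toReal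
        = θL1 j' := by rw [hc3, ← eL1 j']
    have hα0' : (μP {p : (Fin 2 × Fin 2) × Fin J × X | p.1 = (0,1) ∧ p.2.1 = j'}).toReal
        = θU0 j' := by rw [hc4, ← eU0 j']
    have hβ1 : (μM {p : (Fin 2 × Fin 2) × Fin J × X | p.1 = (1,1) ∧ p.2.1 = j}).toReal
        = θL1 j := by rw [hd3, ← eL1 j]
    have hβ0 : (μM {p : (Fin 2 × Fin 2) × Fin J × X | p.1 = (0,1) ∧ p.2.1 = j}).toReal
        = θU0 j := by rw [hd4, ← eU0 j]
    have hβ1' : (μM {p : (Fin 2 × Fin 2) × Fin J × X | p.1 = (1,1) ∧ p.2.1 = j'}).toReal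
        = θU1 j' := by rw [hd1, ← eU1 j']
    have hβ0' : (μM {p : (Fin 2 × Fin 2) × Fin J × X | p.1 = (0,1) ∧ p.2.1 = j'}).toReal
        = θL0 j' := by rw [hd2, ← eL0 j']
    -- positivity of the four denominators
    have hA : 0 < θU1 j + θL0 j := by linarith [hLU1 j]
    have hB : 0 < θL1 j + θU0 j := by linarith [hLU0 j]
    have hA' : 0 < θL1 j' + θU0 j' := by linarith [hLU0 j']
    have hB' : 0 < θU1 j' + θL0 j' := by linarith [hLU1 j']
    set g : ℝ → ℝ := fun t =>
      (t * θU1 j + (1-t) * θL1 j) /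
        ((t * θL0 j + (1-t) * θU0 j) + (t * θU1 j + (1-t) * θL1 j)) -
      (t * θL1 j' + (1-t) * θU1 j') /
        ((t * θU0 j' + (1-t) * θL0 j') + (t * θL1 j' + (1-t) * θU1 j')) with hg
    have hD1 : ∀ t ∈ Set.Icc (0:ℝ) 1,
        0 < (t * θL0 j + (1-t) * θU0 j) + (t * θU1 j + (1-t) * θL1 j) := by
      intro t ht
      have e1 : (t * θL0 j + (1-t) * θU0 j) + (t * θU1 j + (1-t) * θL1 j)
          = t * (θU1 j + θL0 j) + (1-t) * (θL1 j + θU0 j) := by ring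
      rw [e1]
      rcases lt_or_eq_of_le ht.1 with h | h
      · nlinarith [mul_pos h hA, mul_nonneg (sub_nonneg.2 ht.2) hB.le]
      · rw [← h]; simpa using hB
    have hD2 : ∀ t ∈ Set.Icc (0:ℝ) 1,
        0 < (t * θU0 j' + (1-t) * θL0 j') + (t * θL1 j' + (1-t) * θU1 j') := by
      intro t ht
      have e1 : (t * θU0 j' + (1-t) * θL0 j') + (t * θL1 j' + (1-t) * θU1 j')
          = t * (θL1 j' + θU0 j') + (1-t) * (θU1 j' + θL0 j') := by ring
      rw [e1]
      rcases lt_or_eq_of_le ht.1 with h | h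
      · nlinarith [mul_pos h hA', mul_nonneg (sub_nonneg.2 ht.2) hB'.le]
      · rw [← h]; simpa using hB'
    have hgc : ContinuousOn g (Set.Icc 0 1) := by
      rw [hg]
      apply ContinuousOn.sub
      · exact ContinuousOn.div (by fun_prop) (by fun_prop) (fun t ht => (hD1 t ht).ne')
      · exact ContinuousOn.div (by fun_prop) (by fun_prop) (fun t ht => (hD2 t ht).ne')
    have hg1 : g 1 = θU1 j / (θU1 j + θL0 j) - θL1 j' / (θL1 j' + θU0 j') := by
      rw [hg]
      norm_num
      rw [add_comm (θL0 j) (θU1 j), add_comm (θU0 j') (θL1 j')]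
    have hg0 : g 0 = θL1 j / (θL1 j + θU0 j) - θU1 j' / (θU1 j' + θL0 j') := by
      rw [hg]
      norm_num
      rw [add_comm (θU0 j) (θL1 j), add_comm (θL0 j') (θU1 j')]
    obtain ⟨t, ht, hgt⟩ := intermediate_value_Icc (zero_le_one) hgc
      (by rw [hg0, hg1]; exact ⟨hdL, hdU⟩)
    have ht1 : (0:ℝ) ≤ 1 - t := by linarith [ht.2]
    set ν : Measure ((Fin 2 × Fin 2) × Fin J × X) :=
      (ENNReal.ofReal t) • μP + (ENNReal.ofReal (1-t)) • μM with hν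
    have hcoef : ENNReal.ofReal t + ENNReal.ofReal (1-t) = 1 := by
      rw [← ENNReal.ofReal_add ht.1 ht1]
      norm_num
    have hνprob : IsProbabilityMeasure ν := by
      constructor
      rw [hν, Measure.add_apply, Measure.smul_apply, Measure.smul_apply, smul_eq_mul,
        smul_eq_mul, measure_univ, measure_univ, mul_one, mul_one, hcoef]
    haveI := hνprob
    have hf1 : Measurable fun p : (Fin 2 × Fin 2) × Fin J × X => (p.1, p.2.2) :=
      measurable_fst.prodMk measurable_snd.snd
    have hf0 : Measurable fun p : (Fin 2 × Fin 2) × Fin J × X => (p.2.1, p.2.2) :=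
      measurable_snd.fst.prodMk measurable_snd.snd
    have hν1 : ν.map (fun p => (p.1, p.2.2)) = μ1X := by
      rw [hν, Measure.map_add _ _ hf1, Measure.map_smul, Measure.map_smul, hP1, hM1, hκ1,
        ← add_smul, hcoef, one_smul]
    have hν0 : ν.map (fun p => (p.2.1, p.2.2)) = μ0X := by
      rw [hν, Measure.map_add _ _ hf0, Measure.map_smul, Measure.map_smul, hP0, hM0, hκ0,
        ← add_smul, hcoef, one_smul]
    have hval : ∀ E : Set ((Fin 2 × Fin 2) × Fin J × X),
        (ν E).toReal = t * (μP E).toReal + (1-t) * (μM E).toReal := by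
      intro E
      rw [hν, Measure.add_apply, Measure.smul_apply, Measure.smul_apply, smul_eq_mul,
        smul_eq_mul,
        ENNReal.toReal_add (ENNReal.mul_ne_top ENNReal.ofReal_ne_top (measure_ne_top _ _))
          (ENNReal.mul_ne_top ENNReal.ofReal_ne_top (measure_ne_top _ _)),
        ENNReal.toReal_mul, ENNReal.toReal_mul, ENNReal.toReal_ofReal ht.1,
        ENNReal.toReal_ofReal ht1]
    refine ⟨ν, ⟨hνprob, hν1, hν0⟩, ?_⟩
    rw [denom_split ν j, denom_split ν j', hval, hval, hval, hval,
      hα1, hα0, hα1', hα0', hβ1, hβ0, hβ1', hβ0', ← hgt, hg]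
end

section
/- Let X be a standard Borel space with probability measure μ_X, κ1 a measurable kernel from X to probability measures on {0,1}², κ0 a measurable kernel from X to probability measures on {a_1, …, a_J}, and μ1X, μ0X the induced joint laws on {0,1}² × X and {a_1,…,a_J} × X. Set P11(x) := κ1(x)({(1,1)}), P01(x) := κ1(x)({(0,1)}), P_ℓ(x) := κ0(x)({a_ℓ}). Then for any distinct classes a_j ≠ a_{j†} there exists a single measure μ ∈ M(μ1X, μ0X) simultaneously attaining the four Fréchet bounds: μ({y1=(1,1), y0=a_j}) = ∫ min{P11, P_j} dμ_X, μ({y1=(0,1), y0=a_j}) = ∫ max{P01 + P_j − 1, 0} dμ_X, μ({y1=(1,1), y0=a_{j†}}) = ∫ max{P11 + P_{j†} − 1, 0} dμ_X, and μ({y1=(0,1), y0=a_{j†}}) = ∫ min{P01, P_{j†}} dμ_X (the simultaneous-attainability claim established in the proof of Corollary 2 via an optimal transport problem with ±1 costs). -/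
open MeasureTheory ProbabilityTheory
open Set

noncomputable section
namespace TPRDaux

def cum (w : ℕ → ℝ) (k : ℕ) : ℝ := ∑ i ∈ Finset.range k, w i

def invF (n : ℕ) (w : ℕ → ℝ) (u : ℝ) : ℕ :=
  ∑ k ∈ Finset.range (n - 1), if cum w (k + 1) ≤ u then 1 else 0

lemma cum_zero (w : ℕ → ℝ) : cum w 0 = 0 := by simp [cum]

lemma cum_succ (w : ℕ → ℝ) (k : ℕ) : cum w (k+1) = cum w k + w k := by
  simp [cum, Finset.sum_range_succ]

lemma cum_mono {w : ℕ → ℝ} (hw : ∀ i, 0 ≤ w i) : Monotone (cum w) := by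
  intro a b hab
  exact Finset.sum_le_sum_of_subset_of_nonneg (Finset.range_subset_range.2 hab)
    (fun i _ _ => hw i)

lemma cum_nonneg {w : ℕ → ℝ} (hw : ∀ i, 0 ≤ w i) (k : ℕ) : 0 ≤ cum w k := by
  simpa [cum_zero] using cum_mono hw (Nat.zero_le k)

lemma invF_lt {n : ℕ} (hn : 0 < n) (w : ℕ → ℝ) (u : ℝ) : invF n w u < n := by
  have : invF n w u ≤ ∑ k ∈ Finset.range (n-1), 1 := by
    apply Finset.sum_le_sum
    intro k _
    split <;> simp
  simp only [Finset.sum_const, Finset.card_range, smul_eq_mul, mul_one] at this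
  omega

lemma invF_eq {n : ℕ} {w : ℕ → ℝ} (hw : ∀ i, 0 ≤ w i) {k : ℕ} (hk : k < n) {u : ℝ}
    (h1 : cum w k ≤ u) (h2 : u < cum w (k + 1)) : invF n w u = k := by
  unfold invF
  have hcong : ∀ m ∈ Finset.range (n-1),
      (if cum w (m + 1) ≤ u then (1:ℕ) else 0) = if m < k then 1 else 0 := by
    intro m _
    by_cases hm : m < k
    · have : cum w (m+1) ≤ cum w k := cum_mono hw (by omega)
      simp [hm, le_trans this h1]
    · have : cum w (k+1) ≤ cum w (m+1) := cum_mono hw (by omega)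
      have : ¬ cum w (m+1) ≤ u := by linarith
      simp [hm, this]
  rw [Finset.sum_congr rfl hcong, Finset.sum_ite, Finset.sum_const, Finset.sum_const]
  have : Finset.filter (· < k) (Finset.range (n-1)) = Finset.range k := by
    ext m; simp only [Finset.mem_filter, Finset.mem_range]; omega
  rw [this, Finset.card_range]
  simp

lemma exists_interval {n : ℕ} {w : ℕ → ℝ} (hw : ∀ i, 0 ≤ w i) (hn : 0 < n) {u : ℝ}
    (h0 : 0 ≤ u) (hu : u < cum w n) : ∃ k < n, cum w k ≤ u ∧ u < cum w (k + 1) := by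
  have hn1 : n - 1 + 1 = n := by omega
  have hex : ∃ m, u < cum w (m + 1) := ⟨n - 1, by rwa [hn1]⟩
  classical
  let k := Nat.find hex
  have hk2 : u < cum w (k + 1) := Nat.find_spec hex
  have hk1 : cum w k ≤ u := by
    rcases Nat.eq_zero_or_pos k with h | h
    · simpa [h, cum_zero] using h0
    · have := Nat.find_min hex (m := k - 1) (by omega)
      push_neg at this
      have hkk : k - 1 + 1 = k := by omega
      rwa [hkk] at this
  have hkn : k < n := by
    by_contra h
    push_neg at h
    have : cum w n ≤ cum w k := cum_mono hw h
    linarith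
  exact ⟨k, hkn, hk1, hk2⟩

lemma invF_eq_iff {n : ℕ} {w : ℕ → ℝ} (hw : ∀ i, 0 ≤ w i) (hn : 0 < n) {u : ℝ}
    (h0 : 0 ≤ u) (hu : u < cum w n) {k : ℕ} (hk : k < n) :
    invF n w u = k ↔ cum w k ≤ u ∧ u < cum w (k + 1) := by
  constructor
  · intro h
    obtain ⟨i, hi, h1, h2⟩ := exists_interval hw hn h0 hu
    have := invF_eq hw hi h1 h2
    rw [this] at h; subst h; exact ⟨h1, h2⟩
  · exact fun ⟨h1, h2⟩ => invF_eq hw hk h1 h2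

lemma preimage_label {n : ℕ} {w : ℕ → ℝ} (hw : ∀ i, 0 ≤ w i) (hn : 0 < n)
    (hT : cum w n = 1) {E : Type*} (f : ℕ → E) {k : ℕ} (hk : k < n)
    (hinj : ∀ m, m < n → f m = f k → m = k) :
    {u : ℝ | f (invF n w u) = f k} ∩ Ico (0:ℝ) 1 = Ico (cum w k) (cum w (k + 1)) := by
  ext u
  simp only [mem_inter_iff, mem_setOf_eq, mem_Ico]
  constructor
  · rintro ⟨hf, h0, h1⟩
    have hlt : invF n w u < n := invF_lt hn w u
    have := hinj _ hlt hf
    have hiff := (invF_eq_iff hw hn h0 (by rwa [hT]) hlt).1 rfl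
    rw [this] at hiff
    exact hiff
  · rintro ⟨h1, h2⟩
    have h0 : 0 ≤ u := le_trans (cum_nonneg hw k) h1
    have hu1 : u < 1 := lt_of_lt_of_le h2 (by rw [← hT]; exact cum_mono hw hk)
    exact ⟨by rw [invF_eq hw hk h1 h2], h0, hu1⟩

variable {X : Type*} [MeasurableSpace X]

/-- the uniform measure on `[0,1)` -/
def nu : Measure ℝ := volume.restrict (Ico (0:ℝ) 1)

instance : IsProbabilityMeasure (nu) :=
  ⟨by rw [nu, Measure.restrict_apply_univ, Real.volume_Ico]; simp⟩

lemma measurable_invF {n : ℕ} {w : X → ℕ → ℝ} (hw : ∀ k, Measurable fun x => w x k) :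
    Measurable fun p : X × ℝ => invF n (w p.1) p.2 := by
  unfold invF
  apply Finset.measurable_sum
  intro k _
  have hc : Measurable fun p : X × ℝ => cum (w p.1) (k + 1) := by
    unfold cum
    exact Finset.measurable_sum _ (fun i _ => (hw i).comp measurable_fst)
  exact Measurable.ite (measurableSet_le hc measurable_snd) measurable_const measurable_const

/-- kernel `x ↦` pushforward of uniform `[0,1)` under `u ↦ g (x, u)` -/
def coupleKer {E : Type*} [MeasurableSpace E]
    (g : X × ℝ → E) (hg : Measurable g) : Kernel X E where
  toFun x := nu.map (fun u => g (x, u))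
  measurable' := by
    apply Measure.measurable_of_measurable_coe
    intro s hs
    have : (fun x => nu.map (fun u => g (x, u)) s) = fun x => nu (Prod.mk x ⁻¹' (g ⁻¹' s)) := by
      funext x
      have hgx : Measurable fun u => g (x, u) := hg.comp measurable_prodMk_left
      rw [Measure.map_apply hgx hs]
      rfl
    rw [this]
    exact measurable_measure_prodMk_left (hg hs)

lemma coupleKer_apply {E : Type*} [MeasurableSpace E]
    (g : X × ℝ → E) (hg : Measurable g) (x : X) :
    coupleKer g hg x = nu.map (fun u => g (x, u)) := rfl

instance {E : Type*} [MeasurableSpace E] (g : X × ℝ → E) (hg : Measurable g) :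
    IsMarkovKernel (coupleKer g hg) :=
  ⟨fun _ => Measure.isProbabilityMeasure_map (hg.comp measurable_prodMk_left).aemeasurable⟩

lemma nu_label {n : ℕ} {w : ℕ → ℝ} (hw : ∀ i, 0 ≤ w i) (hn : 0 < n)
    (hT : cum w n = 1) {E : Type*} (f : ℕ → E) {k : ℕ} (hk : k < n)
    (hinj : ∀ m, m < n → f m = f k → m = k) :
    nu {u : ℝ | f (invF n w u) = f k} = ENNReal.ofReal (w k) := by
  rw [nu, Measure.restrict_apply' measurableSet_Ico, preimage_label hw hn hT f hk hinj,
    Real.volume_Ico, cum_succ, add_sub_cancel_left]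

/-- enumeration of `Fin 2 × Fin 2` with `(0,1)` first and `(1,1)` last -/
def e1 : ℕ → Fin 2 × Fin 2 := fun k =>
  if k = 0 then (0, 1) else if k = 1 then (0, 0) else if k = 2 then (1, 0) else (1, 1)

lemma e1_inj : ∀ m < 4, ∀ k < 4, e1 m = e1 k → m = k := by decide

lemma e1_cover : ∀ s : Fin 2 × Fin 2, ∃ k, k < 4 ∧ e1 k = s := by decide

lemma exists_equiv {J : ℕ} (j j' : Fin J) (h : j ≠ j') (hJ : 2 ≤ J) :
    ∃ σ : Fin J ≃ Fin J, σ ⟨0, by omega⟩ = j' ∧ σ ⟨J - 1, by omega⟩ = j := by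
  set z : Fin J := ⟨0, by omega⟩ with hz
  set t : Fin J := ⟨J - 1, by omega⟩ with ht
  have hzt : z ≠ t := by
    simp only [hz, ht, ne_eq, Fin.mk.injEq]
    omega
  let τ1 := Equiv.swap z j'
  let τ2 := Equiv.swap t (τ1.symm j)
  have hzj : τ1.symm j ≠ z := by
    intro hc
    apply h
    have : j = τ1 z := by rw [← hc, Equiv.apply_symm_apply]
    rw [this, Equiv.swap_apply_left]
  refine ⟨τ2.trans τ1, ?_, ?_⟩
  · have h2 : τ2 z = z := Equiv.swap_apply_of_ne_of_ne hzt (Ne.symm hzj)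
    simp only [Equiv.trans_apply, h2]
    exact Equiv.swap_apply_left z j'
  · have h2 : τ2 t = τ1.symm j := Equiv.swap_apply_left t (τ1.symm j)
    simp only [Equiv.trans_apply, h2]
    exact Equiv.apply_symm_apply τ1 j

lemma one_sub_max (a b : ℝ) : 1 - max (1 - a) (1 - b) = min a b := by
  rcases le_total a b with h | h
  · rw [max_eq_left (by linarith), min_eq_left h]; ring
  · rw [max_eq_right (by linarith), min_eq_right h]; ring

lemma ofReal_max0 (t : ℝ) : ENNReal.ofReal (max t 0) = ENNReal.ofReal t := by
  rcases le_total t 0 with h | h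
  · rw [max_eq_right h, ENNReal.ofReal_of_nonpos h]; simp
  · rw [max_eq_left h]

end TPRDaux
end

open TPRDaux Set

/-- The simultaneous-attainability claim in the proof of Corollary 2: a single coupling
`μ ∈ M(μ1X, μ0X)` attains the four Fréchet bounds at the pair of classes `a_j ≠ a_{j†}`
simultaneously. -/
theorem tprd_simultaneous_frechet_attainability
    {J : ℕ} {X : Type*} [MeasurableSpace X] [StandardBorelSpace X]
    (μX : Measure X) [IsProbabilityMeasure μX]
    (κ1 : Kernel X (Fin 2 × Fin 2)) [IsMarkovKernel κ1]
    (κ0 : Kernel X (Fin J)) [IsMarkovKernel κ0]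
    (μ1X : Measure ((Fin 2 × Fin 2) × X)) (μ0X : Measure (Fin J × X))
    (hκ1 : (μX.compProd κ1).map Prod.swap = μ1X)
    (hκ0 : (μX.compProd κ0).map Prod.swap = μ0X)
    (j j' : Fin J) (hjj' : j ≠ j')
    (P11 P01 : X → ℝ) (Pc : Fin J → X → ℝ)
    (hP11 : P11 = fun x => (κ1 x {((1:Fin 2), (1:Fin 2))}).toReal)
    (hP01 : P01 = fun x => (κ1 x {((0:Fin 2), (1:Fin 2))}).toReal)
    (hPc : Pc = fun ℓ x => (κ0 x {ℓ}).toReal) :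
    ∃ μ ∈ MSet μ1X μ0X,
      (μ {p : (Fin 2 × Fin 2) × Fin J × X | p.1 = (1, 1) ∧ p.2.1 = j}).toReal =
          (∫ x, min (P11 x) (Pc j x) ∂μX) ∧
      (μ {p : (Fin 2 × Fin 2) × Fin J × X | p.1 = (0, 1) ∧ p.2.1 = j}).toReal =
          (∫ x, max (P01 x + Pc j x - 1) 0 ∂μX) ∧
      (μ {p : (Fin 2 × Fin 2) × Fin J × X | p.1 = (1, 1) ∧ p.2.1 = j'}).toReal =
          (∫ x, max (P11 x + Pc j' x - 1) 0 ∂μX) ∧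
      (μ {p : (Fin 2 × Fin 2) × Fin J × X | p.1 = (0, 1) ∧ p.2.1 = j'}).toReal =
          (∫ x, min (P01 x) (Pc j' x) ∂μX) := by
  classical
  subst hP11 hP01 hPc
  have hJ2 : 2 ≤ J := by
    by_contra h
    push_neg at h
    have h1 := j.isLt
    have h2 := j'.isLt
    exact hjj' (Fin.ext (by omega))
  have hJ1 : 0 < J := by omega
  have hJ' : J - 1 + 1 = J := by omega
  obtain ⟨σ, hσ0, hσtop⟩ := exists_equiv j j' hjj' hJ2
  -- labelled weights
  set f0 : ℕ → Fin J := fun k => σ ⟨min k (J - 1), by omega⟩ with hf0def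
  have hf0 : ∀ k (hk : k < J), f0 k = σ ⟨k, hk⟩ := by
    intro k hk
    simp only [hf0def]
    congr 1
    exact Fin.ext (by simp; omega)
  have hf00 : f0 0 = j' := by
    rw [hf0 0 hJ1, ← hσ0]
  have hf0top : f0 (J - 1) = j := by
    rw [hf0 (J-1) (by omega), ← hσtop]
  set w1 : X → ℕ → ℝ := fun x k => if k < 4 then (κ1 x {e1 k}).toReal else 0 with hw1def
  set w0 : X → ℕ → ℝ := fun x k => if k < J then (κ0 x {f0 k}).toReal else 0 with hw0def
  have hw1m : ∀ k, Measurable fun x => w1 x k := by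
    intro k
    simp only [hw1def]
    split
    · exact (Kernel.measurable_coe κ1 (measurableSet_singleton _)).ennreal_toReal
    · exact measurable_const
  have hw0m : ∀ k, Measurable fun x => w0 x k := by
    intro k
    simp only [hw0def]
    split
    · exact (Kernel.measurable_coe κ0 (measurableSet_singleton _)).ennreal_toReal
    · exact measurable_const
  have hw1nn : ∀ x i, 0 ≤ w1 x i := by
    intro x i
    simp only [hw1def]
    split
    · exact ENNReal.toReal_nonneg
    · exact le_refl 0
  have hw0nn : ∀ x i, 0 ≤ w0 x i := by
    intro x i
    simp only [hw0def]
    split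
    · exact ENNReal.toReal_nonneg
    · exact le_refl 0
  -- total mass one
  have hT1 : ∀ x, cum (w1 x) 4 = 1 := by
    intro x
    have hsum : ∑ s : Fin 2 × Fin 2, κ1 x {s} = 1 := by
      have := sum_measure_preimage_singleton (μ := κ1 x) Finset.univ
        (f := (id : Fin 2 × Fin 2 → Fin 2 × Fin 2)) (fun b _ => measurableSet_singleton b)
      simpa using this
    have h2 : cum (w1 x) 4 = ∑ s : Fin 2 × Fin 2, (κ1 x {s}).toReal := by
      rw [cum, Finset.sum_range_succ, Finset.sum_range_succ, Finset.sum_range_succ,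
        Finset.sum_range_one, Fintype.sum_prod_type]
      simp only [hw1def, e1, Fin.sum_univ_two]
      norm_num
      ring
    rw [h2, ← ENNReal.toReal_sum (fun a _ => measure_ne_top _ _), hsum, ENNReal.toReal_one]
  have hT0 : ∀ x, cum (w0 x) J = 1 := by
    intro x
    have hsum : ∑ a : Fin J, κ0 x {a} = 1 := by
      have := sum_measure_preimage_singleton (μ := κ0 x) Finset.univ
        (f := (id : Fin J → Fin J)) (fun b _ => measurableSet_singleton b)
      simpa using this
    have h1 : cum (w0 x) J = ∑ k ∈ Finset.range J, (κ0 x {f0 k}).toReal := by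
      rw [cum]
      apply Finset.sum_congr rfl
      intro k hk
      simp only [hw0def]
      rw [if_pos (Finset.mem_range.1 hk)]
    rw [h1, ← Fin.sum_univ_eq_sum_range (fun k => (κ0 x {f0 k}).toReal) J]
    have h2 : ∀ i : Fin J, (κ0 x {f0 i.val}).toReal = (κ0 x {σ i}).toReal := by
      intro i
      rw [hf0 i.val i.isLt]
    rw [Finset.sum_congr rfl (fun i _ => h2 i), Equiv.sum_comp σ (fun a => (κ0 x {a}).toReal),
      ← ENNReal.toReal_sum (fun a _ => measure_ne_top _ _), hsum, ENNReal.toReal_one]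
  -- cumulative values
  have hA11 : ∀ x, cum (w1 x) 1 = (κ1 x {((0:Fin 2), (1:Fin 2))}).toReal := by
    intro x
    rw [cum_succ, cum_zero, zero_add]
    simp [hw1def, e1]
  have hA13 : ∀ x, cum (w1 x) 3 = 1 - (κ1 x {((1:Fin 2), (1:Fin 2))}).toReal := by
    intro x
    have h4 := hT1 x
    have : cum (w1 x) 4 = cum (w1 x) 3 + w1 x 3 := cum_succ (w1 x) 3
    have hw13 : w1 x 3 = (κ1 x {((1:Fin 2), (1:Fin 2))}).toReal := by
      simp [hw1def, e1]
    linarith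
  have hA01 : ∀ x, cum (w0 x) 1 = (κ0 x {j'}).toReal := by
    intro x
    rw [cum_succ, cum_zero, zero_add]
    simp only [hw0def]
    rw [if_pos hJ1, hf00]
  have hA0top : ∀ x, cum (w0 x) (J - 1) = 1 - (κ0 x {j}).toReal := by
    intro x
    have hJ0 := hT0 x
    have h1 : cum (w0 x) (J - 1 + 1) = cum (w0 x) (J-1) + w0 x (J-1) := cum_succ (w0 x) (J-1)
    rw [hJ'] at h1
    have hw0t : w0 x (J-1) = (κ0 x {j}).toReal := by
      simp only [hw0def]
      rw [if_pos (by omega), hf0top]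
    linarith
  -- the coupling map and kernel
  set g : X × ℝ → (Fin 2 × Fin 2) × Fin J :=
    fun p => (e1 (invF 4 (w1 p.1) p.2), f0 (invF J (w0 p.1) p.2)) with hgdef
  have hg : Measurable g := by
    apply Measurable.prodMk
    · exact (Measurable.of_discrete (f := e1)).comp (measurable_invF (n := 4) hw1m)
    · exact (Measurable.of_discrete (f := f0)).comp (measurable_invF (n := J) hw0m)
  set κ : Kernel X ((Fin 2 × Fin 2) × Fin J) := coupleKer g hg with hκdef
  haveI : IsMarkovKernel κ := by rw [hκdef]; infer_instance
  set φ : X × ((Fin 2 × Fin 2) × Fin J) → (Fin 2 × Fin 2) × Fin J × X :=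
    fun p => (p.2.1, p.2.2, p.1) with hφdef
  have hφ : Measurable φ := by
    apply Measurable.prodMk (measurable_fst.comp measurable_snd)
    exact Measurable.prodMk (measurable_snd.comp measurable_snd) measurable_fst
  have hgx : ∀ x, Measurable fun u => g (x, u) := fun x => hg.comp measurable_prodMk_left
  -- marginals of the kernel
  have hfst : ∀ x, (κ x).map Prod.fst = κ1 x := by
    intro x
    apply Measure.ext_of_singleton
    intro s
    obtain ⟨k, hk, hks⟩ := e1_cover s
    rw [hκdef, coupleKer_apply, Measure.map_map measurable_fst (hgx x),
      Measure.map_apply (measurable_fst.comp (hgx x)) (measurableSet_singleton s)]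
    have hpre : (Prod.fst ∘ fun u => g (x, u)) ⁻¹' {s}
        = {u : ℝ | e1 (invF 4 (w1 x) u) = e1 k} := by
      ext u
      simp only [Set.mem_preimage, Function.comp_apply, Set.mem_singleton_iff, Set.mem_setOf_eq,
        hgdef, hks]
    rw [hpre, nu_label (hw1nn x) (by norm_num) (hT1 x) e1 hk
      (fun m hm h => e1_inj m hm k hk h)]
    simp only [hw1def]
    rw [if_pos hk, ENNReal.ofReal_toReal (measure_ne_top _ _), hks]
  have hinj0 : ∀ (k0 : ℕ), k0 < J → ∀ m, m < J → f0 m = f0 k0 → m = k0 := by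
    intro k0 hk0 m hm h
    rw [hf0 _ hm, hf0 _ hk0] at h
    simpa using congrArg Fin.val (σ.injective h)
  have hsnd : ∀ x, (κ x).map Prod.snd = κ0 x := by
    intro x
    apply Measure.ext_of_singleton
    intro a
    have hk : (σ.symm a).val < J := (σ.symm a).isLt
    have hka : f0 (σ.symm a).val = a := by
      rw [hf0 _ hk]
      have : (⟨(σ.symm a).val, hk⟩ : Fin J) = σ.symm a := Fin.eta _ _
      rw [this, Equiv.apply_symm_apply]
    rw [hκdef, coupleKer_apply, Measure.map_map measurable_snd (hgx x),
      Measure.map_apply (measurable_snd.comp (hgx x)) (measurableSet_singleton a)]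
    have hpre : (Prod.snd ∘ fun u => g (x, u)) ⁻¹' {a}
        = {u : ℝ | f0 (invF J (w0 x) u) = f0 (σ.symm a).val} := by
      ext u
      simp only [Set.mem_preimage, Function.comp_apply, Set.mem_singleton_iff, Set.mem_setOf_eq,
        hgdef, hka]
    rw [hpre, nu_label (hw0nn x) hJ1 (hT0 x) f0 hk (hinj0 _ hk)]
    simp only [hw0def]
    rw [if_pos hk, ENNReal.ofReal_toReal (measure_ne_top _ _), hka]
  -- measurability of target sets
  have hms : ∀ (s : Fin 2 × Fin 2) (a : Fin J),
      MeasurableSet {p : (Fin 2 × Fin 2) × Fin J × X | p.1 = s ∧ p.2.1 = a} := by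
    intro s a
    have h1 : MeasurableSet {p : (Fin 2 × Fin 2) × Fin J × X | p.1 = s} :=
      measurable_fst (measurableSet_singleton s)
    have h2 : MeasurableSet {p : (Fin 2 × Fin 2) × Fin J × X | p.2.1 = a} :=
      (measurable_fst.comp measurable_snd) (measurableSet_singleton a)
    exact h1.inter h2
  -- generic computation of the coupling mass of a corner set
  have hval : ∀ (k1 : ℕ), k1 < 4 → ∀ (k0 : ℕ), k0 < J →
      ((μX.compProd κ).map φ) {p : (Fin 2 × Fin 2) × Fin J × X | p.1 = e1 k1 ∧ p.2.1 = f0 k0}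
      = ∫⁻ x, volume (Ico (cum (w1 x) k1) (cum (w1 x) (k1+1))
          ∩ Ico (cum (w0 x) k0) (cum (w0 x) (k0+1))) ∂μX := by
    intro k1 hk1 k0 hk0
    rw [Measure.map_apply hφ (hms _ _), Measure.compProd_apply (hφ (hms _ _))]
    apply lintegral_congr
    intro x
    have h1 : Prod.mk x ⁻¹' (φ ⁻¹' {p : (Fin 2 × Fin 2) × Fin J × X | p.1 = e1 k1 ∧ p.2.1 = f0 k0})
        = ({w : (Fin 2 × Fin 2) × Fin J | w.1 = e1 k1} ∩ {w | w.2 = f0 k0}) := rfl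
    rw [h1]
    have hms2 : MeasurableSet ({w : (Fin 2 × Fin 2) × Fin J | w.1 = e1 k1} ∩ {w | w.2 = f0 k0}) :=
      (measurable_fst (measurableSet_singleton _)).inter
        (measurable_snd (measurableSet_singleton _))
    rw [hκdef, coupleKer_apply, Measure.map_apply (hgx x) hms2]
    have h2 : ((fun u => g (x, u)) ⁻¹'
          ({w : (Fin 2 × Fin 2) × Fin J | w.1 = e1 k1} ∩ {w | w.2 = f0 k0}))
        = ({u : ℝ | e1 (invF 4 (w1 x) u) = e1 k1} ∩ {u | f0 (invF J (w0 x) u) = f0 k0}) := rfl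
    rw [h2, nu, Measure.restrict_apply' measurableSet_Ico, Set.inter_inter_distrib_right,
      preimage_label (hw1nn x) (by norm_num) (hT1 x) e1 hk1 (fun m hm h => e1_inj m hm k1 hk1 h),
      preimage_label (hw0nn x) hJ1 (hT0 x) f0 hk0 (hinj0 k0 hk0)]
  -- bounds and measurability of the integrands
  have hle1 : ∀ (s : Set (Fin 2 × Fin 2)) (x : X), (κ1 x s).toReal ≤ 1 := by
    intro s x
    rw [← ENNReal.toReal_one]
    exact ENNReal.toReal_mono ENNReal.one_ne_top prob_le_one
  have hle0 : ∀ (a : Fin J) (x : X), (κ0 x {a}).toReal ≤ 1 := by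
    intro a x
    rw [← ENNReal.toReal_one]
    exact ENNReal.toReal_mono ENNReal.one_ne_top prob_le_one
  have hm11 : Measurable fun x => (κ1 x {((1:Fin 2), (1:Fin 2))}).toReal :=
    (Kernel.measurable_coe κ1 (measurableSet_singleton _)).ennreal_toReal
  have hm01 : Measurable fun x => (κ1 x {((0:Fin 2), (1:Fin 2))}).toReal :=
    (Kernel.measurable_coe κ1 (measurableSet_singleton _)).ennreal_toReal
  have hmc : ∀ a : Fin J, Measurable fun x => (κ0 x {a}).toReal := fun a =>
    (Kernel.measurable_coe κ0 (measurableSet_singleton _)).ennreal_toReal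
  have hconv : ∀ (f : X → ℝ), Measurable f → (∀ x, 0 ≤ f x) →
      (∫⁻ x, ENNReal.ofReal (f x) ∂μX).toReal = ∫ x, f x ∂μX := by
    intro f hf hnn
    rw [integral_eq_lintegral_of_nonneg_ae (Filter.Eventually.of_forall hnn)
      hf.aestronglyMeasurable]
  refine ⟨(μX.compProd κ).map φ, ⟨?_, ?_, ?_⟩, ?_, ?_, ?_, ?_⟩
  · exact Measure.isProbabilityMeasure_map hφ.aemeasurable
  · -- first marginal
    rw [Measure.map_map (g := fun p : (Fin 2 × Fin 2) × Fin J × X => (p.1, p.2.2)) (f := φ)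
      (by fun_prop) hφ, ← hκ1]
    have hψ : Measurable fun p : X × ((Fin 2 × Fin 2) × Fin J) => (p.2.1, p.1) :=
      (measurable_fst.comp measurable_snd).prodMk measurable_fst
    rw [show ((fun p : (Fin 2 × Fin 2) × Fin J × X => (p.1, p.2.2)) ∘ φ)
        = fun p : X × ((Fin 2 × Fin 2) × Fin J) => (p.2.1, p.1) from rfl]
    ext s hs
    rw [Measure.map_apply hψ hs, Measure.compProd_apply (hψ hs),
      Measure.map_apply measurable_swap hs, Measure.compProd_apply (measurable_swap hs)]
    apply lintegral_congr
    intro x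
    have hmeas : MeasurableSet (Prod.mk x ⁻¹' (Prod.swap ⁻¹' s)) :=
      measurable_prodMk_left (measurable_swap hs)
    have hpre : Prod.mk x ⁻¹' ((fun p : X × ((Fin 2 × Fin 2) × Fin J) => (p.2.1, p.1)) ⁻¹' s)
        = Prod.fst ⁻¹' (Prod.mk x ⁻¹' (Prod.swap ⁻¹' s)) := rfl
    rw [hpre, ← Measure.map_apply measurable_fst hmeas, hfst x]
  · -- second marginal
    rw [Measure.map_map (g := fun p : (Fin 2 × Fin 2) × Fin J × X => (p.2.1, p.2.2)) (f := φ)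
      (by fun_prop) hφ, ← hκ0]
    have hψ : Measurable fun p : X × ((Fin 2 × Fin 2) × Fin J) => (p.2.2, p.1) :=
      (measurable_snd.comp measurable_snd).prodMk measurable_fst
    rw [show ((fun p : (Fin 2 × Fin 2) × Fin J × X => (p.2.1, p.2.2)) ∘ φ)
        = fun p : X × ((Fin 2 × Fin 2) × Fin J) => (p.2.2, p.1) from rfl]
    ext s hs
    rw [Measure.map_apply hψ hs, Measure.compProd_apply (hψ hs),
      Measure.map_apply measurable_swap hs, Measure.compProd_apply (measurable_swap hs)]
    apply lintegral_congr
    intro x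
    have hmeas : MeasurableSet (Prod.mk x ⁻¹' (Prod.swap ⁻¹' s)) :=
      measurable_prodMk_left (measurable_swap hs)
    have hpre : Prod.mk x ⁻¹' ((fun p : X × ((Fin 2 × Fin 2) × Fin J) => (p.2.2, p.1)) ⁻¹' s)
        = Prod.snd ⁻¹' (Prod.mk x ⁻¹' (Prod.swap ⁻¹' s)) := rfl
    rw [hpre, ← Measure.map_apply measurable_snd hmeas, hsnd x]
  · -- value 1 : (1,1), j  ↦ ∫ min P11 Pcj
    have hseteq : {p : (Fin 2 × Fin 2) × Fin J × X | p.1 = (1, 1) ∧ p.2.1 = j}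
        = {p : (Fin 2 × Fin 2) × Fin J × X | p.1 = e1 3 ∧ p.2.1 = f0 (J-1)} := by
      rw [show e1 3 = ((1:Fin 2), (1:Fin 2)) from rfl, hf0top]
    rw [hseteq, hval 3 (by norm_num) (J-1) (by omega)]
    have hIeq : ∀ x, volume (Ico (cum (w1 x) 3) (cum (w1 x) (3+1))
        ∩ Ico (cum (w0 x) (J-1)) (cum (w0 x) (J-1+1)))
        = ENNReal.ofReal (min ((κ1 x {((1:Fin 2), (1:Fin 2))}).toReal)
            ((κ0 x {j}).toReal)) := by
      intro x
      rw [show (3+1 : ℕ) = 4 from rfl, hJ', hT1 x, hT0 x, hA13 x, hA0top x, Ico_inter_Ico,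
        Real.volume_Ico]
      congr 1
      rw [min_self]
      exact one_sub_max _ _
    rw [lintegral_congr hIeq,
      hconv _ (hm11.min (hmc j)) (fun x => le_min ENNReal.toReal_nonneg ENNReal.toReal_nonneg)]
  · -- value 2 : (0,1), j  ↦ ∫ max (P01 + Pcj - 1) 0
    have hseteq : {p : (Fin 2 × Fin 2) × Fin J × X | p.1 = (0, 1) ∧ p.2.1 = j}
        = {p : (Fin 2 × Fin 2) × Fin J × X | p.1 = e1 0 ∧ p.2.1 = f0 (J-1)} := by
      rw [show e1 0 = ((0:Fin 2), (1:Fin 2)) from rfl, hf0top]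
    rw [hseteq, hval 0 (by norm_num) (J-1) (by omega)]
    have hIeq : ∀ x, volume (Ico (cum (w1 x) 0) (cum (w1 x) (0+1))
        ∩ Ico (cum (w0 x) (J-1)) (cum (w0 x) (J-1+1)))
        = ENNReal.ofReal (max ((κ1 x {((0:Fin 2), (1:Fin 2))}).toReal
            + (κ0 x {j}).toReal - 1) 0) := by
      intro x
      rw [show (0+1 : ℕ) = 1 from rfl, hJ', cum_zero, hT0 x, hA11 x, hA0top x, Ico_inter_Ico,
        Real.volume_Ico, ofReal_max0]
      congr 1
      rw [min_eq_left (hle1 _ x), max_eq_right (by linarith [hle0 j x])]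
      ring
    rw [lintegral_congr hIeq,
      hconv (fun x => max ((κ1 x {((0:Fin 2), (1:Fin 2))}).toReal + (κ0 x {j}).toReal - 1) 0) ((hm01.add (hmc j)).sub measurable_const |>.max measurable_const)
        (fun x => le_max_right _ _)]
  · -- value 3 : (1,1), j' ↦ ∫ max (P11 + Pcj' - 1) 0
    have hseteq : {p : (Fin 2 × Fin 2) × Fin J × X | p.1 = (1, 1) ∧ p.2.1 = j'}
        = {p : (Fin 2 × Fin 2) × Fin J × X | p.1 = e1 3 ∧ p.2.1 = f0 0} := by
      rw [show e1 3 = ((1:Fin 2), (1:Fin 2)) from rfl, hf00]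
    rw [hseteq, hval 3 (by norm_num) 0 hJ1]
    have hIeq : ∀ x, volume (Ico (cum (w1 x) 3) (cum (w1 x) (3+1))
        ∩ Ico (cum (w0 x) 0) (cum (w0 x) (0+1)))
        = ENNReal.ofReal (max ((κ1 x {((1:Fin 2), (1:Fin 2))}).toReal
            + (κ0 x {j'}).toReal - 1) 0) := by
      intro x
      rw [show (3+1 : ℕ) = 4 from rfl, show (0+1 : ℕ) = 1 from rfl, cum_zero, hT1 x, hA13 x,
        hA01 x, Ico_inter_Ico, Real.volume_Ico, ofReal_max0]
      congr 1
      rw [min_eq_right (hle0 j' x), max_eq_left (by linarith [hle1 {((1:Fin 2), (1:Fin 2))} x])]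
      ring
    rw [lintegral_congr hIeq,
      hconv (fun x => max ((κ1 x {((1:Fin 2), (1:Fin 2))}).toReal + (κ0 x {j'}).toReal - 1) 0) ((hm11.add (hmc j')).sub measurable_const |>.max measurable_const)
        (fun x => le_max_right _ _)]
  · -- value 4 : (0,1), j' ↦ ∫ min P01 Pcj'
    have hseteq : {p : (Fin 2 × Fin 2) × Fin J × X | p.1 = (0, 1) ∧ p.2.1 = j'}
        = {p : (Fin 2 × Fin 2) × Fin J × X | p.1 = e1 0 ∧ p.2.1 = f0 0} := by
      rw [show e1 0 = ((0:Fin 2), (1:Fin 2)) from rfl, hf00]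
    rw [hseteq, hval 0 (by norm_num) 0 hJ1]
    have hIeq : ∀ x, volume (Ico (cum (w1 x) 0) (cum (w1 x) (0+1))
        ∩ Ico (cum (w0 x) 0) (cum (w0 x) (0+1)))
        = ENNReal.ofReal (min ((κ1 x {((0:Fin 2), (1:Fin 2))}).toReal)
            ((κ0 x {j'}).toReal)) := by
      intro x
      simp only [cum_zero]
      rw [show (0+1 : ℕ) = 1 from rfl, hA11 x, hA01 x, Ico_inter_Ico,
        Real.volume_Ico]
      congr 1
      rw [max_self, sub_zero]
    rw [lintegral_congr hIeq,
      hconv _ (hm01.min (hmc j')) (fun x => le_min ENNReal.toReal_nonneg ENNReal.toReal_nonneg)]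
end
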